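/- arXiv:2311.08797 — 4 statements merged into one kernel-verified Lean document; each statement's English description precedes it below -/
import Mathlib

section
/- Let G be a finite abelian p-group and D a diagram on G, and set C₁ = min{ |J[D]_K^H({χ})| : K < H ≤ G with [H:K] = p and χ ∈ K̂ }. Then for every pair of subgroups K < H ≤ G and every χ ∈ K̂, |J[D]_K^H({χ})| ≥ C₁^{rk(K,H)}, where rk(K,H) = log_p [H:K]. -/
open scoped Classical

/-- The character group of `G`: monoid homomorphisms to `ℂˣ`. -/
abbrev CharGp (G : Type*) [Group G] := G →* ℂˣ

/-- Complex conjugation acting on characters: `χ ↦ χ̄`. -/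
noncomputable def charConj {G : Type*} [Group G] (χ : CharGp G) : CharGp G :=
  (Units.map (starRingEnd ℂ).toMonoidHom).comp χ

/-- Restriction of characters along an inclusion of subgroups: `R_K^H` on elements. -/
def resChar {G : Type*} [Group G] {K H : Subgroup G} (h : K ≤ H) (χ : CharGp H) : CharGp K :=
  χ.comp (Subgroup.inclusion h)

/-- Restriction of a character of `G` itself to a subgroup. -/
def resCharTop {G : Type*} [Group G] (K : Subgroup G) (χ : CharGp G) : CharGp K :=
  χ.comp K.subtype

/-- A transfer system on a finite group `G`: a partial order on subgroups refining
inclusion, closed under conjugation and under intersection-pullback. -/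
structure TransferSystem (G : Type*) [Group G] where
  rel : Subgroup G → Subgroup G → Prop
  le_of_rel : ∀ {K H : Subgroup G}, rel K H → K ≤ H
  refl : ∀ H : Subgroup G, rel H H
  trans : ∀ {K L H : Subgroup G}, rel K L → rel L H → rel K H
  conj : ∀ {K H : Subgroup G} (g : G), rel K H →
    rel (K.map (MulAut.conj g).toMonoidHom) (H.map (MulAut.conj g).toMonoidHom)
  inf_rel : ∀ {K H : Subgroup G} (L : Subgroup G), rel K H → L ≤ H → rel (K ⊓ L) L

/-- A transfer system is saturated if `(K,H) ∈ ℛ` and `K ≤ L ≤ H` imply `(L,H) ∈ ℛ`. -/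
def TransferSystem.Saturated {G : Type*} [Group G] (R : TransferSystem G) : Prop :=
  ∀ ⦃K L H : Subgroup G⦄, R.rel K H → K ≤ L → L ≤ H → R.rel L H

/-- A subgroup `H` is `ℛ`-cofibrant if there is no proper `K < H` with `(K,H) ∈ ℛ`. -/
def TransferSystem.Cofibrant {G : Type*} [Group G] (R : TransferSystem G)
    (H : Subgroup G) : Prop :=
  ¬ ∃ K : Subgroup G, K < H ∧ R.rel K H

/-- `𝒰_G`: subsets of `Ĝ` containing the trivial character and closed under conjugation. -/
def UnivSet (G : Type*) [Group G] : Set (Set (CharGp G)) :=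
  {U | (1 : CharGp G) ∈ U ∧ ∀ χ ∈ U, charConj χ ∈ U}

/-- `Tr(U)`: the relation `{(K,H) : K ≤ H and I_K^H(R_K^G(U)) ⊆ R_H^G(U)}`. -/
def TrRel {G : Type*} [Group G] (U : Set (CharGp G)) (K H : Subgroup G) : Prop :=
  ∃ h : K ≤ H, resChar h ⁻¹' (resCharTop K '' U) ⊆ resCharTop H '' U

/-- The family `J[D]` associated to a diagram `D`:
`J[D]_K^H(U) = I_K^H(U) \ ⋃_{L ∈ (K,H]} I_L^H(D(L))`. -/
def JD {G : Type*} [CommGroup G] (D : ∀ H : Subgroup G, Set (CharGp H))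
    (K H : Subgroup G) (h : K ≤ H) (U : Set (CharGp K)) : Set (CharGp H) :=
  (resChar h ⁻¹' U) \
    ⋃ (L : Subgroup G) (hL : L ≤ H) (_ : ¬ L ≤ K), resChar hL ⁻¹' D L


/-- Characters of a finite group form a finite type. -/
instance charGpFinite (H : Type*) [Group H] [Finite H] : Finite (CharGp H) := by
  haveI : NeZero (Nat.card H) := ⟨Nat.card_pos.ne'⟩
  have h0 : ∀ (χ : CharGp H) (g : H), χ g ∈ rootsOfUnity (Nat.card H) ℂ := by
    intro χ g
    rw [mem_rootsOfUnity, ← map_pow, pow_card_eq_one', map_one]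
  have hinj : Function.Injective
      (fun (χ : CharGp H) (g : H) => (⟨χ g, h0 χ g⟩ : rootsOfUnity (Nat.card H) ℂ)) := by
    intro χ ψ hh
    ext g
    have h1 : (⟨χ g, h0 χ g⟩ : rootsOfUnity (Nat.card H) ℂ) = ⟨ψ g, h0 ψ g⟩ := congrFun hh g
    exact congrArg (fun z : rootsOfUnity (Nat.card H) ℂ => ((z : ℂˣ) : ℂ)) h1
  exact Finite.of_injective _ hinj

/-- Fiberwise counting: if every fiber of `f` over `T` inside `S` has at least `c`
elements and `f` maps `S` into `T`, then `|S| ≥ c * |T|`. -/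
lemma fiber_count {α β : Type*} [Finite α] [Finite β] (f : α → β) (S : Set α) (T : Set β)
    (c : ℕ) (hmap : ∀ a ∈ S, f a ∈ T) (hfib : ∀ b ∈ T, c ≤ (S ∩ f ⁻¹' {b}).ncard) :
    c * T.ncard ≤ S.ncard := by
  have := Fintype.ofFinite α
  have := Fintype.ofFinite β
  have hS : S.ncard = S.toFinset.card := Set.ncard_eq_toFinset_card' S
  have hT : T.ncard = T.toFinset.card := Set.ncard_eq_toFinset_card' T
  have hsum : S.toFinset.card =
      ∑ b ∈ T.toFinset, (S.toFinset.filter (fun a => f a = b)).card :=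
    Finset.card_eq_sum_card_fiberwise
      (by intro x hx; simp only [Finset.mem_coe, Set.mem_toFinset] at *; exact hmap x hx)
  have key : ∀ b ∈ T.toFinset, c ≤ (S.toFinset.filter (fun a => f a = b)).card := by
    intro b hb
    have he : (S ∩ f ⁻¹' {b}).toFinset = S.toFinset.filter (fun a => f a = b) := by
      ext a; simp
    calc c ≤ (S ∩ f ⁻¹' {b}).ncard := hfib b (by simpa using hb)
      _ = _ := by rw [Set.ncard_eq_toFinset_card', he]
  calc c * T.ncard = ∑ _b ∈ T.toFinset, c := by
        rw [hT, Finset.sum_const, smul_eq_mul, mul_comm]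
    _ ≤ ∑ b ∈ T.toFinset, (S.toFinset.filter (fun a => f a = b)).card := Finset.sum_le_sum key
    _ = S.ncard := by rw [hS, hsum]

/-- In a finite abelian group, a pair `K ≤ H` of relative index `p ^ (s+1)` admits an
intermediate subgroup `M` with `[M : K] = p` and `[H : M] = p ^ s`. -/
lemma exists_intermediate {G : Type*} [CommGroup G] [Fintype G] {p s : ℕ} (hp : p.Prime)
    {K H : Subgroup G} (hKH : K ≤ H) (hrel : K.relIndex H = p ^ (s + 1)) :
    ∃ M : Subgroup G, K ≤ M ∧ M ≤ H ∧ K.relIndex M = p ∧ M.relIndex H = p ^ s := by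
  haveI : Fact p.Prime := ⟨hp⟩
  set N : Subgroup ↥H := K.subgroupOf H with hN
  have hcardQ : Nat.card (↥H ⧸ N) = p ^ (s + 1) := hrel
  obtain ⟨y, hy⟩ := exists_prime_orderOf_dvd_card' (G := ↥H ⧸ N) p
    (by rw [hcardQ]; exact dvd_pow_self p (Nat.succ_ne_zero s))
  set Z := Subgroup.zpowers y with hZdef
  have hZ : Nat.card Z = p := by rw [Nat.card_zpowers, hy]
  set M' := Z.comap (QuotientGroup.mk' N) with hM'def
  set M := M'.map H.subtype with hMdef
  have hMH : M ≤ H := Subgroup.map_subtype_le M'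
  have hM'H : M.subgroupOf H = M' :=
    Subgroup.comap_map_eq_self_of_injective H.subtype_injective M'
  have hN_le : N ≤ M' := by
    intro x hx
    have hx1 : (QuotientGroup.mk' N) x = 1 := (QuotientGroup.eq_one_iff x).mpr hx
    show (QuotientGroup.mk' N) x ∈ Z
    rw [hx1]; exact one_mem Z
  have hKM : K ≤ M := by
    have h1 : K ⊓ H ≤ M := by
      rw [← Subgroup.subgroupOf_map_subtype]
      exact Subgroup.map_mono hN_le
    exact le_trans (le_inf le_rfl hKH) h1
  have hMH_rel : M.relIndex H = p ^ s := by
    have h1 : M'.index = Z.index :=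
      Subgroup.index_comap_of_surjective _ (QuotientGroup.mk'_surjective N)
    have h2 : p * Z.index = p * p ^ s := by
      calc p * Z.index = Nat.card Z * Z.index := by rw [hZ]
        _ = p ^ (s + 1) := by rw [Subgroup.card_mul_index, hcardQ]
        _ = p * p ^ s := pow_succ' p s
    have h3 : Z.index = p ^ s := Nat.eq_of_mul_eq_mul_left hp.pos h2
    show (M.subgroupOf H).index = p ^ s
    rw [hM'H, h1, h3]
  have hKM_rel : K.relIndex M = p := by
    have hmul := Subgroup.relIndex_mul_relIndex K M H hKM hMH
    rw [hMH_rel, hrel] at hmul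
    have h2 : K.relIndex M * p ^ s = p * p ^ s := by rw [hmul, pow_succ']
    exact Nat.eq_of_mul_eq_mul_right (pow_pos hp.pos s) h2
  exact ⟨M, hKM, hMH, hKM_rel, hMH_rel⟩

/-- Transitivity of character restriction. -/
lemma resChar_trans {G : Type*} [Group G] {K M H : Subgroup G} (h1 : K ≤ M) (h2 : M ≤ H)
    (ψ : CharGp H) : resChar h1 (resChar h2 ψ) = resChar (h1.trans h2) ψ := rfl

/-- **Lemma (clusteredness from index-`p` steps).** Let `G` be a finite abelian
`p`-group, `D` a diagram on `G`, and `C₁` the minimum of `|J[D]_K^H({χ})|` over all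
`K < H` of index `p` and `χ ∈ K̂`. Then for all `K < H` with `[H:K] = p^r` and all
`χ ∈ K̂`, `|J[D]_K^H({χ})| ≥ C₁ ^ r`. -/
theorem clustered_from_index_p (p : ℕ) (hp : p.Prime)
    (G : Type*) [CommGroup G] [Fintype G] (hG : IsPGroup p G)
    (D : ∀ H : Subgroup G, Set (CharGp H)) :
    ∀ (K H : Subgroup G) (h : K < H) (χ : CharGp K) (r : ℕ),
      K.relIndex H = p ^ r →
      (sInf {n : ℕ | ∃ (K' H' : Subgroup G) (h' : K' < H') (χ' : CharGp K'),
          K'.relIndex H' = p ∧ n = (JD D K' H' h'.le {χ'}).ncard}) ^ r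
        ≤ (JD D K H h.le {χ}).ncard := by
  set Cset := {n : ℕ | ∃ (K' H' : Subgroup G) (h' : K' < H') (χ' : CharGp K'),
      K'.relIndex H' = p ∧ n = (JD D K' H' h'.le {χ'}).ncard} with hCset
  intro K H h χ r
  induction r generalizing K H χ with
  | zero =>
    intro hrel
    rw [pow_zero] at hrel
    exact absurd (Subgroup.relIndex_eq_one.mp hrel) h.not_ge
  | succ s ih =>
    intro hrel
    rcases Nat.eq_zero_or_pos s with hs0 | hs0
    · subst hs0
      rw [pow_one] at hrel ⊢
      exact Nat.sInf_le ⟨K, H, h, χ, hrel, rfl⟩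
    · obtain ⟨M, hKM, hMH, hKM_rel, hMH_rel⟩ := exists_intermediate hp h.le hrel
      set C := sInf Cset with hC
      have hKM_lt : K < M := lt_of_le_of_ne hKM (fun he => by
        rw [← he, Subgroup.relIndex_self] at hKM_rel
        exact hp.one_lt.ne hKM_rel)
      have hMH_lt : M < H := lt_of_le_of_ne hMH (fun he => by
        rw [he, Subgroup.relIndex_self] at hMH_rel
        exact (Nat.one_lt_pow hs0.ne' hp.one_lt).ne' hMH_rel.symm)
      have hmap : ∀ ψ ∈ JD D K H h.le {χ}, resChar hMH ψ ∈ JD D K M hKM {χ} := by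
        intro ψ hψ
        obtain ⟨hres, hnot⟩ := hψ
        refine ⟨?_, ?_⟩
        · exact hres
        · intro hmem
          apply hnot
          simp only [Set.mem_iUnion] at hmem ⊢
          obtain ⟨L, hLM, hLK, hLmem⟩ := hmem
          refine ⟨L, hLM.trans hMH, hLK, ?_⟩
          rw [Set.mem_preimage] at hLmem ⊢
          rw [resChar_trans] at hLmem
          exact hLmem
      have hfib : ∀ χ' ∈ JD D K M hKM {χ},
          C ^ s ≤ ((JD D K H h.le {χ}) ∩ resChar hMH ⁻¹' {χ'}).ncard := by
        intro χ' hχ'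
        obtain ⟨hres', hnot'⟩ := hχ'
        have hres'' : resChar hKM χ' = χ := hres'
        have hsub : JD D M H hMH {χ'} ⊆ (JD D K H h.le {χ}) ∩ resChar hMH ⁻¹' {χ'} := by
          intro ψ hψ
          obtain ⟨hresψ, hnotψ⟩ := hψ
          have hresψ' : resChar hMH ψ = χ' := hresψ
          refine ⟨⟨?_, ?_⟩, hresψ⟩
          · show resChar h.le ψ ∈ ({χ} : Set (CharGp K))
            show resChar h.le ψ = χ
            calc resChar h.le ψ = resChar hKM (resChar hMH ψ) := rfl
              _ = resChar hKM χ' := by rw [hresψ']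
              _ = χ := hres''
          · intro hmem
            simp only [Set.mem_iUnion] at hmem
            obtain ⟨L, hLH, hLK, hLmem⟩ := hmem
            by_cases hLM : L ≤ M
            · apply hnot'
              simp only [Set.mem_iUnion]
              refine ⟨L, hLM, hLK, ?_⟩
              rw [Set.mem_preimage] at hLmem ⊢
              rw [show resChar hLH ψ = resChar hLM (resChar hMH ψ) from rfl, hresψ'] at hLmem
              exact hLmem
            · apply hnotψ
              simp only [Set.mem_iUnion]
              exact ⟨L, hLH, hLM, hLmem⟩
        calc C ^ s ≤ (JD D M H hMH {χ'}).ncard := ih M H hMH_lt χ' hMH_rel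
          _ ≤ _ := Set.ncard_le_ncard hsub (Set.toFinite _)
      have step := fiber_count (resChar hMH) (JD D K H h.le {χ}) (JD D K M hKM {χ})
        (C ^ s) hmap hfib
      have base : C ≤ (JD D K M hKM {χ}).ncard := Nat.sInf_le ⟨K, M, hKM_lt, χ, hKM_rel, rfl⟩
      calc C ^ (s + 1) = C ^ s * C := pow_succ C s
        _ ≤ C ^ s * (JD D K M hKM {χ}).ncard := Nat.mul_le_mul_left _ base
        _ ≤ _ := step
end

section
/- Let p be a prime and G a finite abelian p-group of rank two with |G| = pⁿ. Then: (i) for every i and every real number k, the sum over subgroups H ≤ G with |H| = pⁱ of |H|^{-k} is at most 2·p^{i(1-k)}; (ii) the sum over nontrivial subgroups H ≤ G of 1/|H| is at most 2n; (iii) if p ≥ 3 and k ≥ 2 is real, the sum over nontrivial subgroups H ≤ G of |H|^{-k} is at most 3·p^{1-k}. -/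
open scoped Classical

open scoped Classical

section DivisorAux

variable {G : Type*} [CommGroup G] [Finite G]

lemma aux_pow_mem_card {K : Subgroup G} {x : G} (hx : x ∈ K) : x ^ Nat.card K = 1 := by
  have h : ((⟨x, hx⟩ : K) ^ Nat.card K) = 1 := pow_card_eq_one'
  rw [Subtype.ext_iff] at h
  push_cast at h
  exact h

lemma aux_card_le {A Z : Subgroup G} (hA : IsCyclic A) {d : ℕ} (hd : 0 < d)
    (hZ : Z ≤ A) (hpow : ∀ x ∈ Z, x ^ d = 1) : Nat.card Z ≤ d := by
  haveI := hA
  haveI : IsCyclic Z := Subgroup.isCyclic_of_le hZ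
  obtain ⟨g, hg⟩ := IsCyclic.exists_generator (α := Z)
  have h1 : orderOf g = Nat.card Z := orderOf_eq_card_of_forall_mem_zpowers hg
  have h2 : orderOf (g : G) = orderOf g := Subgroup.orderOf_coe g
  have h3 : (g : G) ^ d = 1 := hpow _ g.2
  calc Nat.card Z = orderOf (g : G) := by rw [h2, h1]
    _ ≤ d := orderOf_le_of_pow_eq_one hd h3

lemma aux_unique {A K₁ K₂ : Subgroup G} (hA : IsCyclic A) (h₁ : K₁ ≤ A) (h₂ : K₂ ≤ A)
    (h : Nat.card K₁ = Nat.card K₂) : K₁ = K₂ := by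
  set d := Nat.card K₁ with hd
  have hd0 : 0 < d := Nat.card_pos
  have key : ∀ K : Subgroup G, K ≤ A → Nat.card K = d →
      K = A ⊓ ((powMonoidHom d : G →* G)).ker := by
    intro K hKA hKd
    have hle : K ≤ A ⊓ ((powMonoidHom d : G →* G)).ker := by
      refine le_inf hKA ?_
      intro x hx
      have : x ^ d = 1 := by rw [← hKd]; exact aux_pow_mem_card hx
      simpa [MonoidHom.mem_ker] using this
    have hcard : Nat.card (A ⊓ ((powMonoidHom d : G →* G)).ker : Subgroup G) ≤ d :=
      aux_card_le hA hd0 inf_le_left (fun x hx => by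
        simpa [MonoidHom.mem_ker] using hx.2)
    exact (Subgroup.eq_of_le_of_card_ge hle (by rw [hKd]; exact hcard)).symm ▸ rfl
  rw [key K₁ h₁ rfl, key K₂ h₂ h.symm]

end DivisorAux

section DivisorAux2

variable {G : Type*} [CommGroup G] [Finite G]

lemma aux_card_formula (A H : Subgroup G) :
    Nat.card (H ⊓ A : Subgroup G) * Nat.card (H.map (QuotientGroup.mk' A)) = Nat.card H := by
  set π := QuotientGroup.mk' A with hπ
  set ρ := π.comp H.subtype with hρ
  have hrange : ρ.range = H.map π := by
    rw [hρ, MonoidHom.range_comp, Subgroup.range_subtype]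
  have hker : ρ.ker = (H ⊓ A).subgroupOf H := by
    rw [hρ, ← MonoidHom.comap_ker, QuotientGroup.ker_mk']
    rw [Subgroup.inf_subgroupOf_left A H]
    rfl
  have h1 : Nat.card H = Nat.card (↥H ⧸ ρ.ker) * Nat.card ρ.ker :=
    Subgroup.card_eq_card_quotient_mul_card_subgroup ρ.ker
  have h2 : Nat.card (↥H ⧸ ρ.ker) = Nat.card (H.map π) := by
    rw [← hrange]
    exact Nat.card_congr (QuotientGroup.quotientKerEquivRange ρ).toEquiv
  have h3 : Nat.card ρ.ker = Nat.card (H ⊓ A : Subgroup G) := by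
    rw [hker]
    exact Nat.card_congr (Subgroup.subgroupOfEquivOfLe inf_le_left).toEquiv
  rw [h1, h2, h3, Nat.mul_comm]

lemma aux_zpowers_isCyclic (a : G) : IsCyclic (Subgroup.zpowers a) := by
  refine ⟨⟨⟨a, Subgroup.mem_zpowers a⟩, ?_⟩⟩
  rintro ⟨x, hx⟩
  obtain ⟨k, hk⟩ := hx
  exact ⟨k, Subtype.ext (by simpa using hk)⟩

lemma aux_quot_cyclic {a b : G} (hab : Subgroup.closure {a, b} = ⊤) :
    IsCyclic (G ⧸ Subgroup.zpowers a) := by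
  set A := Subgroup.zpowers a
  set π := QuotientGroup.mk' A with hπ
  refine ⟨⟨π b, fun x => ?_⟩⟩
  have hsurj : Function.Surjective π := QuotientGroup.mk'_surjective A
  have htop : (⊤ : Subgroup G).map π = ⊤ := Subgroup.map_top_of_surjective π hsurj
  have hmap : (Subgroup.closure {a, b}).map π = Subgroup.closure (π '' {a, b}) :=
    MonoidHom.map_closure π {a, b}
  have hπa : π a = 1 := by
    simp [hπ, QuotientGroup.mk'_apply, QuotientGroup.eq_one_iff]
    exact Subgroup.mem_zpowers a
  have himg : π '' {a, b} = {1, π b} := by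
    rw [Set.image_pair, hπa]
  have hcl : Subgroup.closure ({1, π b} : Set (G ⧸ A)) ≤ Subgroup.zpowers (π b) := by
    rw [Subgroup.closure_le]
    rintro x (rfl | rfl)
    · exact Subgroup.one_mem _
    · exact Subgroup.mem_zpowers _
  have : (⊤ : Subgroup (G ⧸ A)) ≤ Subgroup.zpowers (π b) := by
    rw [← htop, ← hab, hmap, himg]
    exact hcl
  exact this (Subgroup.mem_top x)

end DivisorAux2
section PartBound

variable {G : Type*} [CommGroup G] [Fintype G]

lemma aux_part_bound {p : ℕ} (hp : p.Prime) [Fintype (Subgroup G)]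
    {a b : G} (hab : Subgroup.closure {a, b} = ⊤) (i v : ℕ) :
    (Finset.univ.filter fun H : Subgroup G =>
        Nat.card H = p ^ i ∧
        Nat.card (H.map (QuotientGroup.mk' (Subgroup.zpowers a))) = p ^ v).card ≤ p ^ v := by
  classical
  set A := Subgroup.zpowers a with hA
  have hAcyc : IsCyclic A := aux_zpowers_isCyclic a
  set π := QuotientGroup.mk' A with hπ
  set P := Finset.univ.filter (fun H : Subgroup G =>
      Nat.card H = p ^ i ∧ Nat.card (H.map π) = p ^ v) with hP
  rcases P.eq_empty_or_nonempty with hPe | ⟨H₀, hH₀⟩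
  · rw [hPe]; simp
  obtain ⟨-, hH₀card, hH₀map⟩ := Finset.mem_filter.1 hH₀
  set Cv := H₀.map π with hCv
  set Kv := H₀ ⊓ A with hKv
  set m := Nat.card Kv with hm
  have hm0 : 0 < m := Nat.card_pos
  have hpv0 : 0 < p ^ v := pow_pos hp.pos v
  have hmv : m * p ^ v = p ^ i := by
    rw [hm, hKv, ← hH₀card, ← hH₀map]
    exact aux_card_formula A H₀
  haveI hQc : IsCyclic (G ⧸ A) := aux_quot_cyclic hab
  haveI : IsCyclic (⊤ : Subgroup (G ⧸ A)) :=
    isCyclic_of_surjective (Subgroup.topEquiv (G := G ⧸ A)).symm.toMonoidHom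
      (MulEquiv.surjective _)
  have hmapeq : ∀ H ∈ P, H.map π = Cv := by
    intro H hH
    obtain ⟨-, h1, h2⟩ := Finset.mem_filter.1 hH
    exact aux_unique (A := (⊤ : Subgroup (G ⧸ A))) ‹_› le_top le_top (by rw [h2, hH₀map])
  have hinfeq : ∀ H ∈ P, H ⊓ A = Kv := by
    intro H hH
    obtain ⟨-, h1, h2⟩ := Finset.mem_filter.1 hH
    refine aux_unique hAcyc inf_le_right inf_le_right ?_
    have hf : Nat.card (H ⊓ A : Subgroup G) * p ^ v = p ^ i := by
      rw [← h1, ← h2]; exact aux_card_formula A H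
    exact Nat.eq_of_mul_eq_mul_right hpv0 (by rw [hf, hmv])
  haveI : IsCyclic Cv := Subgroup.isCyclic Cv
  obtain ⟨gen, hgen⟩ := IsCyclic.exists_generator (α := Cv)
  set g₀ : G ⧸ A := (gen : G ⧸ A) with hg₀
  have hg₀mem : g₀ ∈ Cv := gen.2
  have hg₀gen : ∀ y ∈ Cv, ∃ t : ℤ, g₀ ^ t = y := by
    intro y hy
    obtain ⟨t, ht⟩ := hgen ⟨y, hy⟩
    refine ⟨t, ?_⟩
    have := congrArg Subtype.val ht
    simpa using this
  have hCvcard : Nat.card Cv = p ^ v := hH₀map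
  have hg₀pow : g₀ ^ (p ^ v : ℕ) = 1 := by
    rw [← hCvcard]; exact aux_pow_mem_card hg₀mem
  have hker : ∀ x : G, π x = 1 → x ∈ A := by
    intro x hx
    rw [← QuotientGroup.ker_mk' A]
    exact hx
  set X : Subgroup G → Finset G :=
    fun H => Finset.univ.filter (fun x => x ∈ H ∧ π x = g₀) with hX
  have hgenH : ∀ H ∈ P, ∀ x ∈ X H, H = Kv ⊔ Subgroup.zpowers x := by
    intro H hH x hx
    obtain ⟨hxH, hxπ⟩ := (Finset.mem_filter.1 hx).2
    apply le_antisymm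
    · intro h hhH
      have hmemCv : π h ∈ Cv := by
        rw [← hmapeq H hH]; exact Subgroup.mem_map.2 ⟨h, hhH, rfl⟩
      obtain ⟨t, ht⟩ := hg₀gen _ hmemCv
      have hmem : h * (x ^ t)⁻¹ ∈ Kv := by
        rw [← hinfeq H hH]
        refine ⟨H.mul_mem hhH (H.inv_mem (H.zpow_mem hxH t)), ?_⟩
        apply hker
        rw [map_mul, map_inv, map_zpow, hxπ, ht, mul_inv_cancel]
      have : h = (h * (x ^ t)⁻¹) * x ^ t := by group
      rw [this]
      exact Subgroup.mul_mem _ (Subgroup.mem_sup_left hmem)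
        (Subgroup.mem_sup_right (Subgroup.zpow_mem _ (Subgroup.mem_zpowers x) t))
    · refine sup_le ?_ (Subgroup.zpowers_le.2 hxH)
      rw [← hinfeq H hH]; exact inf_le_left
  have hcard1 : (P.biUnion X).card = ∑ H ∈ P, (X H).card := by
    apply Finset.card_biUnion
    intro H hH H' hH' hne
    show Disjoint (X H) (X H')
    rw [Finset.disjoint_left]
    intro x hx hx'
    exact hne ((hgenH H hH x hx).trans (hgenH H' hH' x hx').symm)
  have hlow : ∀ H ∈ P, m ≤ (X H).card := by
    intro H hH
    have hg₀img : g₀ ∈ H.map π := by rw [hmapeq H hH]; exact hg₀mem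
    rw [Subgroup.mem_map] at hg₀img
    obtain ⟨x₀, hx₀H, hx₀π⟩ := hg₀img
    have hinj : ((Kv : Set G).toFinset).card ≤ (X H).card := by
      apply Finset.card_le_card_of_injOn (fun k => x₀ * k)
      · intro k hk
        rw [Finset.mem_coe, Set.mem_toFinset] at hk
        have hkHA : k ∈ H ⊓ A := by rw [hinfeq H hH]; exact hk
        simp only [hX, Finset.mem_coe, Finset.mem_filter, Finset.mem_univ, true_and]
        constructor
        · exact H.mul_mem hx₀H hkHA.1
        · have hk1 : π k = 1 := by
            have : k ∈ (QuotientGroup.mk' A).ker := by rw [QuotientGroup.ker_mk' A]; exact hkHA.2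
            exact this
          rw [map_mul, hk1, mul_one, hx₀π]
      · intro k _ k' _ h
        exact mul_left_cancel h
    calc m = ((Kv : Set G).toFinset).card := by
          rw [Set.toFinset_card, hm, Nat.card_eq_fintype_card]
          congr 1
      _ ≤ (X H).card := hinj
  set Y : Finset G := Finset.univ.filter (fun x : G => π x = g₀ ∧ x ^ (p ^ v) ∈ Kv) with hY
  have hsub : P.biUnion X ⊆ Y := by
    intro x hx
    obtain ⟨H, hH, hxX⟩ := Finset.mem_biUnion.1 hx
    obtain ⟨hxH, hxπ⟩ := (Finset.mem_filter.1 hxX).2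
    simp only [hY, Finset.mem_filter, Finset.mem_univ, true_and]
    refine ⟨hxπ, ?_⟩
    rw [← hinfeq H hH]
    refine ⟨H.pow_mem hxH _, ?_⟩
    apply hker
    rw [map_pow, hxπ, hg₀pow]
  have hYcard : Y.card ≤ p ^ v * m := by
    rcases Y.eq_empty_or_nonempty with h | ⟨y₀, hy₀⟩
    · rw [h]; simp
    obtain ⟨hy₀π, hy₀pow⟩ := (Finset.mem_filter.1 hy₀).2
    set Z : Subgroup G := A ⊓ Kv.comap (powMonoidHom (p ^ v) : G →* G) with hZ
    have hZcard : Nat.card Z ≤ p ^ v * m := by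
      apply aux_card_le hAcyc (by positivity) inf_le_left
      intro z hz
      have h1 : z ^ (p ^ v) ∈ Kv := hz.2
      rw [pow_mul]
      exact aux_pow_mem_card h1
    have hYZ : Y.card ≤ ((Z : Set G)).toFinset.card := by
      apply Finset.card_le_card_of_injOn (fun y => y₀⁻¹ * y)
      · intro y hy
        obtain ⟨hyπ, hypow⟩ := (Finset.mem_filter.1 hy).2
        rw [Finset.mem_coe, Set.mem_toFinset]
        constructor
        · apply hker
          rw [map_mul, map_inv, hy₀π, hyπ, inv_mul_cancel]
        · show (y₀⁻¹ * y) ^ (p ^ v) ∈ Kv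
          rw [mul_pow, inv_pow]
          exact Kv.mul_mem (Kv.inv_mem hy₀pow) hypow
      · intro y _ y' _ h
        exact mul_left_cancel h
    calc Y.card ≤ ((Z : Set G)).toFinset.card := hYZ
      _ = Nat.card Z := by rw [Set.toFinset_card, Nat.card_eq_fintype_card]; congr 1
      _ ≤ p ^ v * m := hZcard
  have hfin : P.card * m ≤ Y.card := by
    calc P.card * m = ∑ _H ∈ P, m := by rw [Finset.sum_const, smul_eq_mul]
      _ ≤ ∑ H ∈ P, (X H).card := Finset.sum_le_sum hlow
      _ = (P.biUnion X).card := hcard1.symm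
      _ ≤ Y.card := Finset.card_le_card hsub
  exact Nat.le_of_mul_le_mul_right (hfin.trans hYcard) hm0

end PartBound
lemma aux_geom_nat {p : ℕ} (hp : 2 ≤ p) (i : ℕ) :
    ∑ v ∈ Finset.range (i + 1), p ^ v ≤ 2 * p ^ i := by
  induction i with
  | zero => simp
  | succ n ih =>
    rw [Finset.sum_range_succ]
    have h1 : 2 * p ^ n ≤ p ^ (n + 1) := by
      rw [pow_succ, Nat.mul_comm (p ^ n) p]
      exact Nat.mul_le_mul_right _ hp
    calc ∑ v ∈ Finset.range (n + 1), p ^ v + p ^ (n + 1)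
        ≤ 2 * p ^ n + p ^ (n + 1) := Nat.add_le_add_right ih _
      _ ≤ p ^ (n + 1) + p ^ (n + 1) := Nat.add_le_add_right h1 _
      _ = 2 * p ^ (n + 1) := by ring

section NiBound

variable {G : Type*} [CommGroup G] [Fintype G]

lemma aux_Ni_bound {p : ℕ} (hp : p.Prime) [Fintype (Subgroup G)]
    {a b : G} (hab : Subgroup.closure {a, b} = ⊤) (i : ℕ) :
    (Finset.univ.filter fun H : Subgroup G => Nat.card H = p ^ i).card ≤ 2 * p ^ i := by
  classical
  set A := Subgroup.zpowers a with hA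
  set π := QuotientGroup.mk' A with hπ
  have hsub : (Finset.univ.filter fun H : Subgroup G => Nat.card H = p ^ i) ⊆
      (Finset.range (i + 1)).biUnion (fun v => Finset.univ.filter fun H : Subgroup G =>
        Nat.card H = p ^ i ∧ Nat.card (H.map π) = p ^ v) := by
    intro H hH
    have hHcard : Nat.card H = p ^ i := (Finset.mem_filter.1 hH).2
    have hdvd : Nat.card (H.map π) ∣ p ^ i := by
      refine Dvd.intro (Nat.card (H ⊓ A : Subgroup G)) ?_
      rw [← hHcard, Nat.mul_comm]
      exact aux_card_formula A H
    obtain ⟨v, hv, hveq⟩ := (Nat.dvd_prime_pow hp).1 hdvd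
    refine Finset.mem_biUnion.2 ⟨v, Finset.mem_range.2 (Nat.lt_succ_of_le hv), ?_⟩
    exact Finset.mem_filter.2 ⟨Finset.mem_univ _, hHcard, hveq⟩
  calc (Finset.univ.filter fun H : Subgroup G => Nat.card H = p ^ i).card
      ≤ ((Finset.range (i + 1)).biUnion (fun v => Finset.univ.filter fun H : Subgroup G =>
          Nat.card H = p ^ i ∧ Nat.card (H.map π) = p ^ v)).card := Finset.card_le_card hsub
    _ ≤ ∑ v ∈ Finset.range (i + 1), (Finset.univ.filter fun H : Subgroup G =>
          Nat.card H = p ^ i ∧ Nat.card (H.map π) = p ^ v).card := Finset.card_biUnion_le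
    _ ≤ ∑ v ∈ Finset.range (i + 1), p ^ v :=
        Finset.sum_le_sum (fun v _ => aux_part_bound hp hab i v)
    _ ≤ 2 * p ^ i := aux_geom_nat hp.two_le i

end NiBound

/-- **Lemma (divisor sums for rank two `p`-groups).** Let `G` be a rank two abelian
`p`-group with `|G| = pⁿ`. Then (i) `∑_{|H| = pⁱ} |H|^{-k} ≤ 2·p^{i(1-k)}` for every
`i` and real `k`; (ii) `∑_{H ≠ 1} 1/|H| ≤ 2n`; (iii) if `p ≥ 3` and `k ≥ 2` then
`∑_{H ≠ 1} |H|^{-k} ≤ 3·p^{1-k}`. -/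
theorem divisor_sums (p : ℕ) (hp : p.Prime) (n : ℕ)
    (G : Type*) [CommGroup G] [Fintype G] (hG : IsPGroup p G)
    (hrk : ∃ a b : G, Subgroup.closure {a, b} = ⊤)
    (hcard : Nat.card G = p ^ n) :
    (∀ (i : ℕ) (k : ℝ),
      ∑ᶠ (H : Subgroup G) (_ : Nat.card H = p ^ i), ((Nat.card H : ℝ)) ^ (-k)
        ≤ 2 * (p : ℝ) ^ ((i : ℝ) * (1 - k))) ∧
    (∑ᶠ (H : Subgroup G) (_ : H ≠ ⊥), (1 : ℝ) / (Nat.card H : ℝ) ≤ 2 * n) ∧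
    (∀ k : ℝ, 3 ≤ p → 2 ≤ k →
      ∑ᶠ (H : Subgroup G) (_ : H ≠ ⊥), ((Nat.card H : ℝ)) ^ (-k)
        ≤ 3 * (p : ℝ) ^ (1 - k)) := by
  classical
  obtain ⟨a, b, hab⟩ := hrk
  haveI : Finite (Subgroup G) :=
    Finite.of_injective (fun H : Subgroup G => (H : Set G)) SetLike.coe_injective
  haveI : Fintype (Subgroup G) := Fintype.ofFinite _
  have hppos : (0 : ℝ) < (p : ℝ) := by exact_mod_cast hp.pos
  -- Part (i), the key per-`i` estimate.
  have key : ∀ (i : ℕ) (k : ℝ),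
      ∑ H ∈ Finset.univ.filter (fun H : Subgroup G => Nat.card H = p ^ i),
          ((Nat.card H : ℝ)) ^ (-k) ≤ 2 * (p : ℝ) ^ ((i : ℝ) * (1 - k)) := by
    intro i k
    set B : ℝ := (p : ℝ) ^ (i : ℕ) with hB
    have hBpos : 0 < B := by positivity
    have hsum : ∑ H ∈ Finset.univ.filter (fun H : Subgroup G => Nat.card H = p ^ i),
        ((Nat.card H : ℝ)) ^ (-k)
        = ((Finset.univ.filter (fun H : Subgroup G => Nat.card H = p ^ i)).card : ℝ)
            * B ^ (-k) := by
      rw [Finset.sum_congr rfl (fun H hH => ?_), Finset.sum_const, nsmul_eq_mul]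
      have hc : Nat.card H = p ^ i := (Finset.mem_filter.1 hH).2
      rw [hc, Nat.cast_pow]
    have hcount : ((Finset.univ.filter (fun H : Subgroup G => Nat.card H = p ^ i)).card : ℝ)
        ≤ 2 * B := by
      have := aux_Ni_bound hp hab (G := G) i
      calc ((Finset.univ.filter (fun H : Subgroup G => Nat.card H = p ^ i)).card : ℝ)
          ≤ ((2 * p ^ i : ℕ) : ℝ) := by exact_mod_cast this
        _ = 2 * B := by push_cast [hB]; ring
    have hrpow : (0 : ℝ) < B ^ (-k) := Real.rpow_pos_of_pos hBpos _
    have hRHS : (p : ℝ) ^ ((i : ℝ) * (1 - k)) = B * B ^ (-k) := by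
      rw [Real.rpow_mul hppos.le, Real.rpow_natCast,
        show (1 : ℝ) - k = 1 + (-k) by ring, Real.rpow_add hBpos, Real.rpow_one]
    rw [hsum, hRHS]
    calc ((Finset.univ.filter (fun H : Subgroup G => Nat.card H = p ^ i)).card : ℝ) * B ^ (-k)
        ≤ (2 * B) * B ^ (-k) := mul_le_mul_of_nonneg_right hcount hrpow.le
      _ = 2 * (B * B ^ (-k)) := by ring
  have key' : ∀ (i : ℕ) (k : ℝ),
      ∑ᶠ (H : Subgroup G) (_ : Nat.card H = p ^ i), ((Nat.card H : ℝ)) ^ (-k)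
        ≤ 2 * (p : ℝ) ^ ((i : ℝ) * (1 - k)) := by
    intro i k
    rw [finsum_cond_eq_sum_of_cond_iff _
      (fun {H} _ => by simp : ∀ {H : Subgroup G}, _ →
        (Nat.card H = p ^ i ↔ H ∈ Finset.univ.filter (fun H : Subgroup G => Nat.card H = p ^ i)))]
    exact key i k
  -- the decomposition of nontrivial subgroups by order
  have hdecomp : (Finset.univ.filter fun H : Subgroup G => H ≠ ⊥)
      = (Finset.Icc 1 n).biUnion (fun i =>
          Finset.univ.filter fun H : Subgroup G => Nat.card H = p ^ i) := by
    ext H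
    simp only [Finset.mem_filter, Finset.mem_univ, true_and, Finset.mem_biUnion, Finset.mem_Icc]
    constructor
    · intro hne
      have hdvd : Nat.card H ∣ p ^ n := hcard ▸ Subgroup.card_subgroup_dvd_card H
      obtain ⟨j, hj, hjeq⟩ := (Nat.dvd_prime_pow hp).1 hdvd
      refine ⟨j, ⟨?_, hj⟩, hjeq⟩
      rcases Nat.eq_zero_or_pos j with rfl | h
      · exfalso
        apply hne
        rw [← Subgroup.card_eq_one, hjeq, pow_zero]
      · exact h
    · rintro ⟨j, ⟨hj1, -⟩, hjeq⟩
      intro hbot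
      rw [hbot, Subgroup.card_eq_one.2 rfl] at hjeq
      have : 1 < p ^ j := Nat.one_lt_pow (by omega) hp.one_lt
      omega
  have hdisj : (↑(Finset.Icc 1 n) : Set ℕ).PairwiseDisjoint (fun i =>
      Finset.univ.filter fun H : Subgroup G => Nat.card H = p ^ i) := by
    intro i _ j _ hij
    simp only [Function.onFun]
    rw [Finset.disjoint_left]
    intro H hHi hHj
    apply hij
    have h1 := (Finset.mem_filter.1 hHi).2
    have h2 := (Finset.mem_filter.1 hHj).2
    exact Nat.pow_right_injective hp.two_le (by simp only []; omega)
  refine ⟨key', ?_, ?_⟩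
  -- Part (ii)
  · rw [finsum_cond_eq_sum_of_cond_iff _
      (fun {H} _ => by simp : ∀ {H : Subgroup G}, _ →
        (H ≠ ⊥ ↔ H ∈ Finset.univ.filter (fun H : Subgroup G => H ≠ ⊥)))]
    rw [hdecomp, Finset.sum_biUnion hdisj]
    have per : ∀ i ∈ Finset.Icc 1 n,
        ∑ H ∈ Finset.univ.filter (fun H : Subgroup G => Nat.card H = p ^ i),
          (1 : ℝ) / (Nat.card H : ℝ) ≤ 2 := by
      intro i _
      have hpi : (0 : ℝ) < ((p : ℝ) ^ i) := by positivity
      have hsum : ∑ H ∈ Finset.univ.filter (fun H : Subgroup G => Nat.card H = p ^ i),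
          (1 : ℝ) / (Nat.card H : ℝ)
          = ((Finset.univ.filter (fun H : Subgroup G => Nat.card H = p ^ i)).card : ℝ)
              * (1 / (p : ℝ) ^ i) := by
        rw [Finset.sum_congr rfl (fun H hH => ?_), Finset.sum_const, nsmul_eq_mul]
        have hc : Nat.card H = p ^ i := (Finset.mem_filter.1 hH).2
        rw [hc, Nat.cast_pow]
      rw [hsum, mul_one_div, div_le_iff₀ hpi]
      have := aux_Ni_bound hp hab (G := G) i
      calc ((Finset.univ.filter (fun H : Subgroup G => Nat.card H = p ^ i)).card : ℝ)
          ≤ ((2 * p ^ i : ℕ) : ℝ) := by exact_mod_cast this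
        _ = 2 * (p : ℝ) ^ i := by push_cast; ring
    calc ∑ i ∈ Finset.Icc 1 n, ∑ H ∈ Finset.univ.filter
            (fun H : Subgroup G => Nat.card H = p ^ i), (1 : ℝ) / (Nat.card H : ℝ)
        ≤ ∑ i ∈ Finset.Icc 1 n, (2 : ℝ) := Finset.sum_le_sum per
      _ = 2 * n := by rw [Finset.sum_const, Nat.card_Icc, nsmul_eq_mul]; push_cast; ring
  -- Part (iii)
  · intro k hp3 hk2
    set r : ℝ := (p : ℝ) ^ ((1 : ℝ) - k) with hr
    have hr0 : 0 ≤ r := Real.rpow_nonneg hppos.le _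
    have hr13 : r ≤ 1 / 3 := by
      have h1 : r ≤ (p : ℝ) ^ (-1 : ℝ) :=
        Real.rpow_le_rpow_of_exponent_le (by exact_mod_cast hp.one_lt.le) (by linarith)
      have h2 : (p : ℝ) ^ (-1 : ℝ) = 1 / (p : ℝ) := by
        rw [Real.rpow_neg_one]; exact inv_eq_one_div _
      have h3 : (1 : ℝ) / (p : ℝ) ≤ 1 / 3 := by
        apply one_div_le_one_div_of_le (by norm_num)
        exact_mod_cast hp3
      linarith
    rw [finsum_cond_eq_sum_of_cond_iff _
      (fun {H} _ => by simp : ∀ {H : Subgroup G}, _ →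
        (H ≠ ⊥ ↔ H ∈ Finset.univ.filter (fun H : Subgroup G => H ≠ ⊥)))]
    rw [hdecomp, Finset.sum_biUnion hdisj]
    have hpow : ∀ i : ℕ, (p : ℝ) ^ ((i : ℝ) * (1 - k)) = r ^ i := by
      intro i
      rw [mul_comm, Real.rpow_mul hppos.le, ← hr, Real.rpow_natCast]
    have per : ∀ i ∈ Finset.Icc 1 n,
        ∑ H ∈ Finset.univ.filter (fun H : Subgroup G => Nat.card H = p ^ i),
          ((Nat.card H : ℝ)) ^ (-k) ≤ 2 * r ^ i := by
      intro i _
      have := key i k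
      rwa [hpow i] at this
    have hgeom : ∑ j ∈ Finset.range n, r ^ j ≤ 3 / 2 := by
      have hmul := geom_sum_mul r n
      have hrn : 0 ≤ r ^ n := pow_nonneg hr0 n
      have hS : 0 ≤ ∑ j ∈ Finset.range n, r ^ j :=
        Finset.sum_nonneg fun j _ => pow_nonneg hr0 j
      nlinarith [hmul]
    have hsum_r : ∑ i ∈ Finset.Icc 1 n, r ^ i ≤ (3 / 2) * r := by
      have h1 : ∑ i ∈ Finset.Icc 1 n, r ^ i = r * ∑ j ∈ Finset.range n, r ^ j := by
        rw [← Finset.Ico_add_one_right_eq_Icc, Finset.sum_Ico_eq_sum_range,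
          show n + 1 - 1 = n from rfl, Finset.mul_sum]
        refine Finset.sum_congr rfl fun j _ => ?_
        rw [pow_add, pow_one]
      rw [h1]
      calc r * ∑ j ∈ Finset.range n, r ^ j ≤ r * (3 / 2) :=
            mul_le_mul_of_nonneg_left hgeom hr0
        _ = (3 / 2) * r := by ring
    calc ∑ i ∈ Finset.Icc 1 n, ∑ H ∈ Finset.univ.filter
            (fun H : Subgroup G => Nat.card H = p ^ i), ((Nat.card H : ℝ)) ^ (-k)
        ≤ ∑ i ∈ Finset.Icc 1 n, 2 * r ^ i := Finset.sum_le_sum per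
      _ = 2 * ∑ i ∈ Finset.Icc 1 n, r ^ i := by rw [Finset.mul_sum]
      _ ≤ 2 * ((3 / 2) * r) := by
          apply mul_le_mul_of_nonneg_left hsum_r (by norm_num)
      _ = 3 * r := by ring
end

section
/- Let p ≥ 3 be a prime and G a finite abelian p-group of rank two. Then the double sum over nontrivial subgroups H ≤ G and integers k ≥ 2 of |H|^{-k}/k is at most 1. Consequently, for any set T of nontrivial subgroups of G, |Σ_{H∈T} (log(1 + 1/|H|) − 1/|H|)| ≤ 1. -/
open scoped Classical

noncomputable instance instFinSubgroup {G : Type*} [Group G] [Finite G] : Finite (Subgroup G) :=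
  Finite.of_injective (fun H : Subgroup G => (H : Set G)) SetLike.coe_injective

noncomputable instance instFintypeSubgroup {G : Type*} [Group G] [Finite G] :
    Fintype (Subgroup G) := Fintype.ofFinite _

lemma aux_exp_gen_card_le {Q : Type*} [CommGroup Q] {p : ℕ} (hp : 0 < p) {a b : Q}
    (hgen : Subgroup.closure ({a, b} : Set Q) = ⊤) (hexp : ∀ q : Q, q ^ p = 1) :
    Nat.card Q ≤ p * p := by
  have key : ∀ (c : Q) (m : ℤ), c ^ m = c ^ ((m % (p : ℤ)).toNat) := by
    intro c m
    have h0 : (0:ℤ) ≤ m % p := Int.emod_nonneg m (by exact_mod_cast hp.ne')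
    have h1 : c ^ m = c ^ (m % (p:ℤ)) := by
      conv_lhs => rw [← Int.emod_add_mul_ediv m p]
      rw [zpow_add, zpow_mul, zpow_natCast, hexp c, one_zpow, mul_one]
    rw [h1, ← Int.toNat_of_nonneg h0, zpow_natCast, Int.toNat_of_nonneg h0]
  have hsurj : Function.Surjective
      (fun ij : Fin p × Fin p => a ^ (ij.1 : ℕ) * b ^ (ij.2 : ℕ)) := by
    intro q
    have hq : q ∈ Subgroup.closure ({a,b} : Set Q) := hgen ▸ Subgroup.mem_top q
    obtain ⟨m, n, hmn⟩ := Subgroup.mem_closure_pair.mp hq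
    have hmlt : m % (p:ℤ) < p := Int.emod_lt_of_pos m (by exact_mod_cast hp)
    have hnlt : n % (p:ℤ) < p := Int.emod_lt_of_pos n (by exact_mod_cast hp)
    have h0m : (0:ℤ) ≤ m % p := Int.emod_nonneg m (by exact_mod_cast hp.ne')
    have h0n : (0:ℤ) ≤ n % p := Int.emod_nonneg n (by exact_mod_cast hp.ne')
    refine ⟨(⟨(m % (p:ℤ)).toNat, by omega⟩, ⟨(n % (p:ℤ)).toNat, by omega⟩), ?_⟩
    simp only
    rw [← key a m, ← key b n, hmn]
  calc Nat.card Q ≤ Nat.card (Fin p × Fin p) := Nat.card_le_card_of_surjective _ hsurj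
    _ = p * p := by simp

lemma aux_omega_card_le {p : ℕ} (hp : 0 < p) {G : Type*} [CommGroup G] [Fintype G]
    {a b : G} (hgen : Subgroup.closure ({a, b} : Set G) = ⊤) :
    Nat.card (powMonoidHom p : G →* G).ker ≤ p * p := by
  set f := (powMonoidHom p : G →* G) with hf
  have hrpos : 0 < Nat.card f.range := Nat.card_pos
  have h1 : Nat.card G = Nat.card f.range * Nat.card f.ker := by
    have := Subgroup.card_eq_card_quotient_mul_card_subgroup f.ker
    rwa [Nat.card_congr (QuotientGroup.quotientKerEquivRange f).toEquiv] at this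
  have h2 : Nat.card G = Nat.card (G ⧸ f.range) * Nat.card f.range :=
    Subgroup.card_eq_card_quotient_mul_card_subgroup f.range
  have hker : Nat.card f.ker = Nat.card (G ⧸ f.range) := by
    have : Nat.card f.range * Nat.card f.ker = Nat.card f.range * Nat.card (G ⧸ f.range) := by
      rw [← h1]; rw [h2]; ring
    exact Nat.eq_of_mul_eq_mul_left hrpos this
  rw [hker]
  set φ := QuotientGroup.mk' f.range with hφ
  have hqexp : ∀ q : G ⧸ f.range, q ^ p = 1 := by
    intro q
    induction q using QuotientGroup.induction_on with
    | H x =>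
      rw [← QuotientGroup.mk_pow, QuotientGroup.eq_one_iff]
      exact ⟨x, rfl⟩
  have hqgen : Subgroup.closure ({φ a, φ b} : Set (G ⧸ f.range)) = ⊤ := by
    have himg : ({φ a, φ b} : Set (G ⧸ f.range)) = φ '' {a, b} := by
      simp [Set.image_insert_eq]
    rw [himg, ← MonoidHom.map_closure, hgen,
      Subgroup.map_top_of_surjective _ (QuotientGroup.mk'_surjective f.range)]
  exact aux_exp_gen_card_le hp hqgen hqexp

lemma aux_pow_mem {p : ℕ} {G : Type*} [CommGroup G] [Fintype G] {K H : Subgroup G}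
    (hle : K ≤ H) (hcard : Nat.card H = p * Nat.card K) {x : G} (hx : x ∈ H) : x ^ p ∈ K := by
  have hKpos : 0 < Nat.card K := Nat.card_pos
  have hidx : (K.subgroupOf H).index = p := by
    have h1 : (K.subgroupOf H).index * Nat.card (K.subgroupOf H) = Nat.card H :=
      Subgroup.index_mul_card _
    have h2 : Nat.card (K.subgroupOf H) = Nat.card K :=
      Nat.card_congr (Subgroup.subgroupOfEquivOfLe hle).toEquiv
    rw [h2, hcard] at h1
    exact Nat.eq_of_mul_eq_mul_right hKpos h1
  have hmem := Subgroup.pow_index_mem (K.subgroupOf H) (⟨x, hx⟩ : H)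
  rw [hidx] at hmem
  rw [Subgroup.mem_subgroupOf] at hmem
  simpa using hmem
lemma aux_step {p : ℕ} (hp : p.Prime) (hp3 : 3 ≤ p) {G : Type*} [CommGroup G] [Fintype G]
    {a b : G} (hgen : Subgroup.closure ({a, b} : Set G) = ⊤) (K : Subgroup G) :
    (Finset.univ.filter fun H : Subgroup G =>
      K ≤ H ∧ Nat.card H = p * Nat.card K).card ≤ p + 1 := by
  classical
  set f := (powMonoidHom p : G →* G) with hfdef
  set X : Subgroup G := K.comap f with hX
  have hKX : K ≤ X := by
    intro k hk
    have : k ^ p ∈ K := pow_mem hk p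
    simpa [hX, Subgroup.mem_comap, hfdef] using this
  have hΩ : Nat.card f.ker ≤ p * p := aux_omega_card_le hp.pos hgen
  have hKpos : 0 < Nat.card K := Nat.card_pos
  -- card X ≤ p * p * card K
  have hcardX : Nat.card X ≤ p * p * Nat.card K := by
    set φ : X →* K := (f.comp X.subtype).codRestrict K (fun x => x.2) with hφ
    have h1 : Nat.card X = Nat.card (X ⧸ φ.ker) * Nat.card φ.ker :=
      Subgroup.card_eq_card_quotient_mul_card_subgroup φ.ker
    have h2 : Nat.card (X ⧸ φ.ker) = Nat.card φ.range :=
      Nat.card_congr (QuotientGroup.quotientKerEquivRange φ).toEquiv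
    have h3 : Nat.card φ.range ≤ Nat.card K :=
      Nat.le_of_dvd hKpos (Subgroup.card_subgroup_dvd_card _)
    have h4 : Nat.card φ.ker ≤ Nat.card f.ker := by
      refine Nat.card_le_card_of_injective
        (fun g => (⟨(g : X) , ?_⟩ : f.ker)) ?_
      · have hg := g.2
        rw [MonoidHom.mem_ker] at hg ⊢
        have := congrArg (Subtype.val : K → G) hg
        simpa [hφ, hfdef] using this
      · intro g1 g2 h
        have h' : ((g1 : X) : G) = ((g2 : X) : G) := by
          simpa [Subtype.mk.injEq] using h
        exact Subtype.ext (Subtype.ext h')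
    calc Nat.card X = Nat.card φ.range * Nat.card φ.ker := by rw [h1, h2]
      _ ≤ Nat.card K * (p * p) := Nat.mul_le_mul h3 (h4.trans hΩ)
      _ = p * p * Nat.card K := by ring
  -- finset machinery
  set 𝒮 := Finset.univ.filter fun H : Subgroup G =>
      K ≤ H ∧ Nat.card H = p * Nat.card K with hS
  set tF : Subgroup G → Finset G := fun H => (H : Set G).toFinset with htF
  have htFcard : ∀ H : Subgroup G, (tF H).card = Nat.card H := by
    intro H
    rw [← SetLike.coe_sort_coe H, Nat.card_coe_set_eq, Set.ncard_eq_toFinset_card']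
  have htFsub : ∀ {H₁ H₂ : Subgroup G}, H₁ ≤ H₂ → tF H₁ ⊆ tF H₂ := by
    intro H₁ H₂ hle x hx
    rw [Set.mem_toFinset] at hx ⊢
    exact hle hx
  have hmemS : ∀ H ∈ 𝒮, K ≤ H ∧ Nat.card H = p * Nat.card K := by
    intro H hH
    simpa [hS] using hH
  have hHX : ∀ H ∈ 𝒮, H ≤ X := by
    intro H hH x hx
    obtain ⟨hle, hcard⟩ := hmemS H hH
    have := aux_pow_mem hle hcard hx
    simpa [hX, Subgroup.mem_comap, hfdef] using this
  -- disjointness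
  have hdisj : (↑𝒮 : Set (Subgroup G)).PairwiseDisjoint (fun H => tF H \ tF K) := by
    intro H₁ h₁ H₂ h₂ hne
    simp only [Function.onFun]
    rw [Finset.disjoint_left]
    intro x hx1 hx2
    rw [Finset.mem_sdiff, Set.mem_toFinset] at hx1 hx2
    obtain ⟨hle₁, hcard₁⟩ := hmemS H₁ h₁
    obtain ⟨hle₂, hcard₂⟩ := hmemS H₂ h₂
    have hxK : x ∉ K := by
      intro hxK; exact hx1.2 (by rwa [Set.mem_toFinset])
    set L := H₁ ⊓ H₂ with hL
    have hKL : K < L := by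
      refine lt_of_le_of_ne (le_inf hle₁ hle₂) ?_
      intro h
      exact hxK (h ▸ (Subgroup.mem_inf.mpr ⟨hx1.1, hx2.1⟩))
    have hcardlt : Nat.card K < Nat.card L := by
      rw [← SetLike.coe_sort_coe K, ← SetLike.coe_sort_coe L,
        Nat.card_coe_set_eq, Nat.card_coe_set_eq]
      exact Set.ncard_lt_ncard (by exact_mod_cast SetLike.coe_ssubset_coe.mpr hKL)
        (Set.toFinite _)
    have hdvd1 : Nat.card L ∣ Nat.card H₁ := Subgroup.card_dvd_of_le inf_le_left
    obtain ⟨t, ht⟩ := Subgroup.card_dvd_of_le hKL.le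
    have htp : t ∣ p := by
      have : Nat.card K * t ∣ Nat.card K * p := by
        rw [← ht, mul_comm (Nat.card K) p, ← hcard₁]; exact hdvd1
      exact (mul_dvd_mul_iff_left hKpos.ne').mp this
    have ht1 : t ≠ 1 := by
      intro h; rw [h, mul_one] at ht; omega
    have htpeq : t = p := ((Nat.Prime.eq_one_or_self_of_dvd hp t htp).resolve_left ht1)
    have hLcard : Nat.card L = Nat.card H₁ := by rw [ht, htpeq, hcard₁, mul_comm]
    have hL1 : L = H₁ := Subgroup.eq_of_le_of_card_ge inf_le_left hLcard.ge
    have hL2 : L = H₂ := by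
      refine Subgroup.eq_of_le_of_card_ge inf_le_right ?_
      rw [hLcard, hcard₁, ← hcard₂]
    exact hne (hL1 ▸ hL2)
  -- counting
  have hunion : 𝒮.biUnion (fun H => tF H \ tF K) ⊆ tF X \ tF K := by
    intro x hx
    rw [Finset.mem_biUnion] at hx
    obtain ⟨H, hH, hxH⟩ := hx
    rw [Finset.mem_sdiff] at hxH ⊢
    exact ⟨htFsub (hHX H hH) hxH.1, hxH.2⟩
  have hcount : 𝒮.card * ((p - 1) * Nat.card K) ≤ (p * p - 1) * Nat.card K := by
    have hsum : ∑ H ∈ 𝒮, (tF H \ tF K).card = (𝒮.biUnion fun H => tF H \ tF K).card :=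
      (Finset.card_biUnion (fun H h1 H' h2 hne => hdisj h1 h2 hne)).symm
    have heach : ∀ H ∈ 𝒮, (tF H \ tF K).card = (p - 1) * Nat.card K := by
      intro H hH
      obtain ⟨hle, hcard⟩ := hmemS H hH
      rw [Finset.card_sdiff_of_subset (htFsub hle), htFcard, htFcard, hcard]
      have : 1 ≤ p := hp.pos
      rw [Nat.sub_mul, one_mul]
    calc 𝒮.card * ((p - 1) * Nat.card K) = ∑ H ∈ 𝒮, (tF H \ tF K).card := by
          rw [Finset.sum_congr rfl heach, Finset.sum_const, smul_eq_mul]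
      _ = (𝒮.biUnion fun H => tF H \ tF K).card := hsum
      _ ≤ (tF X \ tF K).card := Finset.card_le_card hunion
      _ = Nat.card X - Nat.card K := by
          rw [Finset.card_sdiff_of_subset (htFsub hKX), htFcard, htFcard]
      _ ≤ p * p * Nat.card K - Nat.card K := Nat.sub_le_sub_right hcardX _
      _ = (p * p - 1) * Nat.card K := by
          rw [Nat.sub_mul, one_mul]
  have hfactor : (p * p - 1) * Nat.card K = (p + 1) * ((p - 1) * Nat.card K) := by
    have : 3 ≤ p := hp3
    rw [← mul_assoc]
    congr 1
    have h1 : 1 ≤ p := by omega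
    have h2 : 1 ≤ p * p := Nat.one_le_iff_ne_zero.mpr (by positivity)
    zify [h1, h2]
    ring
  rw [hfactor] at hcount
  have hpos : 0 < (p - 1) * Nat.card K := by
    have : 3 ≤ p := hp3
    exact Nat.mul_pos (by omega) hKpos
  exact Nat.le_of_mul_le_mul_right hcount hpos
lemma aux_count {p : ℕ} (hp : p.Prime) (hp3 : 3 ≤ p) {G : Type*} [CommGroup G] [Fintype G]
    (hG : IsPGroup p G) {a b : G} (hgen : Subgroup.closure ({a, b} : Set G) = ⊤) :
    ∀ n : ℕ, (Finset.univ.filter fun H : Subgroup G =>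
      Nat.card H = p ^ n).card ≤ (p + 1) ^ n := by
  intro n
  induction n with
  | zero =>
    rw [pow_zero]
    refine le_trans (Finset.card_le_card ?_) (le_of_eq (Finset.card_singleton (⊥ : Subgroup G)))
    intro H hH
    rw [Finset.mem_filter] at hH
    rw [Finset.mem_singleton]
    exact Subgroup.card_eq_one.mp hH.2
  | succ n ih =>
    haveI : Fact p.Prime := ⟨hp⟩
    set S := Finset.univ.filter
      (fun H : Subgroup G => Nat.card H = p ^ (n+1)) with hSdef
    set T := Finset.univ.filter
      (fun H : Subgroup G => Nat.card H = p ^ n) with hTdef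
    have hex : ∀ H ∈ S, ∃ K ≤ H, Nat.card K = p ^ n := by
      intro H hH
      rw [hSdef, Finset.mem_filter] at hH
      exact Sylow.exists_subgroup_le_card_pow_prime_of_le_card hp hG
        (by rw [hH.2]; exact Nat.pow_le_pow_right hp.pos n.le_succ)
    set g : Subgroup G → Subgroup G := fun H =>
      if h : ∃ K ≤ H, Nat.card K = p ^ n then h.choose else ⊥ with hg
    have hgmem : ∀ H ∈ S, g H ∈ T := by
      intro H hH
      rw [hg]
      simp only [dif_pos (hex H hH)]
      rw [hTdef, Finset.mem_filter]
      exact ⟨Finset.mem_univ _, (hex H hH).choose_spec.2⟩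
    rw [Finset.card_eq_sum_card_fiberwise hgmem]
    have hfiber : ∀ K ∈ T, (S.filter fun H => g H = K).card ≤ p + 1 := by
      intro K hK
      rw [hTdef, Finset.mem_filter] at hK
      refine le_trans (Finset.card_le_card ?_) (aux_step hp hp3 hgen K)
      intro H hH
      rw [Finset.mem_filter] at hH
      obtain ⟨hHS, hgH⟩ := hH
      have hexH := hex H hHS
      have hchoose := hexH.choose_spec
      rw [hg] at hgH
      simp only [dif_pos hexH] at hgH
      rw [Finset.mem_filter]
      rw [hSdef, Finset.mem_filter] at hHS
      refine ⟨Finset.mem_univ _, hgH ▸ hchoose.1, ?_⟩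
      rw [hHS.2, hK.2, pow_succ, mul_comm]
    calc ∑ K ∈ T, (S.filter fun H => g H = K).card ≤ ∑ K ∈ T, (p + 1) :=
          Finset.sum_le_sum hfiber
      _ = T.card * (p + 1) := by rw [Finset.sum_const, smul_eq_mul]
      _ ≤ (p + 1) ^ n * (p + 1) := Nat.mul_le_mul_right _ ih
      _ = (p + 1) ^ (n + 1) := by rw [pow_succ]

lemma aux_sum {p : ℕ} (hp : p.Prime) (hp3 : 3 ≤ p) {G : Type*} [CommGroup G] [Fintype G]
    (hG : IsPGroup p G) {a b : G} (hgen : Subgroup.closure ({a, b} : Set G) = ⊤) :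
    ∑ H ∈ Finset.univ.filter (fun H : Subgroup G => H ≠ ⊥),
      (1 / (Nat.card H : ℝ)) ^ 2 ≤ 4 / 5 := by
  classical
  haveI : Fact p.Prime := ⟨hp⟩
  set M := Nat.card G with hM
  set S : ℕ → Finset (Subgroup G) := fun n =>
    Finset.univ.filter (fun H : Subgroup G => Nat.card H = p ^ n) with hSdef
  have hcov : Finset.univ.filter (fun H : Subgroup G => H ≠ ⊥) ⊆
      (Finset.range M).biUnion (fun n => S (n + 1)) := by
    intro H hH
    rw [Finset.mem_filter] at hH
    obtain ⟨m, hm⟩ := (hG.to_subgroup H).exists_card_eq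
    have hm1 : 1 ≤ m := by
      rcases Nat.eq_zero_or_pos m with h | h
      · exfalso; apply hH.2; rw [← Subgroup.card_eq_one, hm, h, pow_zero]
      · exact h
    have hmM : m < M := by
      have h1 : p ^ m ≤ M := by
        rw [← hm, hM]
        exact Nat.le_of_dvd Nat.card_pos (Subgroup.card_subgroup_dvd_card H)
      calc m < 2 ^ m := Nat.lt_two_pow_self
        _ ≤ p ^ m := Nat.pow_le_pow_left (by omega) m
        _ ≤ M := h1
    rw [Finset.mem_biUnion]
    refine ⟨m - 1, Finset.mem_range.mpr (by omega), ?_⟩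
    rw [hSdef, Finset.mem_filter]
    exact ⟨Finset.mem_univ _, by rw [hm]; congr 1; omega⟩
  have hdisj : (↑(Finset.range M) : Set ℕ).PairwiseDisjoint (fun n => S (n + 1)) := by
    intro n₁ h₁ n₂ h₂ hne
    simp only [Function.onFun]
    rw [Finset.disjoint_left]
    intro H hH1 hH2
    rw [hSdef, Finset.mem_filter] at hH1 hH2
    exact hne (by
      have := hH1.2 ▸ hH2.2
      have := Nat.pow_right_injective hp.two_le this.symm
      omega)
  have hr : ((p : ℝ) + 1) / (p : ℝ) ^ 2 ≤ 4 / 9 := by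
    have hp3' : (3 : ℝ) ≤ (p : ℝ) := by exact_mod_cast hp3
    rw [div_le_div_iff₀ (by positivity) (by norm_num)]
    nlinarith
  calc ∑ H ∈ Finset.univ.filter (fun H : Subgroup G => H ≠ ⊥), (1 / (Nat.card H : ℝ)) ^ 2
      ≤ ∑ H ∈ (Finset.range M).biUnion (fun n => S (n + 1)), (1 / (Nat.card H : ℝ)) ^ 2 :=
        Finset.sum_le_sum_of_subset_of_nonneg hcov (fun H _ _ => by positivity)
    _ = ∑ n ∈ Finset.range M, ∑ H ∈ S (n + 1), (1 / (Nat.card H : ℝ)) ^ 2 :=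
        Finset.sum_biUnion hdisj
    _ ≤ ∑ n ∈ Finset.range M, (4 / 9 : ℝ) ^ (n + 1) := by
        refine Finset.sum_le_sum fun n _ => ?_
        have heq : ∀ H ∈ S (n + 1), (1 / (Nat.card H : ℝ)) ^ 2 = (1 / (p : ℝ) ^ (n+1)) ^ 2 := by
          intro H hH
          rw [hSdef, Finset.mem_filter] at hH
          rw [hH.2]
          push_cast
          ring
        rw [Finset.sum_congr rfl heq, Finset.sum_const, nsmul_eq_mul]
        have hcard : ((S (n + 1)).card : ℝ) ≤ ((p : ℝ) + 1) ^ (n + 1) := by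
          have := aux_count hp hp3 hG hgen (n + 1)
          calc ((S (n + 1)).card : ℝ) ≤ ((p + 1 : ℕ) ^ (n + 1) : ℕ) := by exact_mod_cast this
            _ = ((p : ℝ) + 1) ^ (n + 1) := by push_cast; ring
        have hppos : (0 : ℝ) < (p : ℝ) := by positivity
        calc ((S (n + 1)).card : ℝ) * (1 / (p : ℝ) ^ (n+1)) ^ 2
            ≤ ((p : ℝ) + 1) ^ (n + 1) * (1 / (p : ℝ) ^ (n+1)) ^ 2 := by
              refine mul_le_mul_of_nonneg_right hcard (by positivity)
          _ = (((p : ℝ) + 1) / (p : ℝ) ^ 2) ^ (n + 1) := by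
              rw [div_pow, ← pow_mul]
              rw [div_pow, one_pow, ← pow_mul, mul_one_div, mul_comm 2 (n+1)]
          _ ≤ (4 / 9 : ℝ) ^ (n + 1) := pow_le_pow_left₀ (by positivity) hr _
    _ ≤ (4 / 9 : ℝ) * ∑ n ∈ Finset.range M, (4 / 9 : ℝ) ^ n := by
        rw [Finset.mul_sum]
        refine le_of_eq (Finset.sum_congr rfl fun n _ => ?_)
        rw [pow_succ]
        ring
    _ ≤ (4 / 9 : ℝ) * (1 - 4 / 9)⁻¹ := by
        refine mul_le_mul_of_nonneg_left ?_ (by norm_num)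
        calc ∑ n ∈ Finset.range M, (4 / 9 : ℝ) ^ n ≤ ∑' n : ℕ, (4 / 9 : ℝ) ^ n :=
              Summable.sum_le_tsum _ (fun n _ => by positivity)
                (summable_geometric_of_lt_one (by norm_num) (by norm_num))
          _ = (1 - 4 / 9)⁻¹ := tsum_geometric_of_lt_one (by norm_num) (by norm_num)
    _ ≤ 4 / 5 := by norm_num
lemma aux_inner {m : ℕ} (hm : 3 ≤ m) :
    ∑' k : ℕ, (1 / (m : ℝ)) ^ (k + 2) / ((k : ℝ) + 2) ≤ (3 / 4) * (1 / (m : ℝ)) ^ 2 := by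
  set x := 1 / (m : ℝ) with hx
  have hm' : (3 : ℝ) ≤ (m : ℝ) := by exact_mod_cast hm
  have hx0 : 0 ≤ x := by positivity
  have hx3 : x ≤ 1 / 3 := by
    rw [hx, div_le_div_iff₀ (by linarith) (by norm_num)]
    linarith
  have hx1 : x < 1 := by linarith
  have hgeo : Summable (fun k : ℕ => x ^ 2 / 2 * x ^ k) :=
    (summable_geometric_of_lt_one hx0 hx1).mul_left _
  have hle : ∀ k : ℕ, x ^ (k + 2) / ((k : ℝ) + 2) ≤ x ^ 2 / 2 * x ^ k := by
    intro k
    have h1 : x ^ (k + 2) = x ^ 2 * x ^ k := by rw [pow_add]; ring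
    have h2 : (2 : ℝ) ≤ (k : ℝ) + 2 := by
      linarith [show (0:ℝ) ≤ (k:ℝ) from Nat.cast_nonneg k]
    calc x ^ (k + 2) / ((k : ℝ) + 2) ≤ x ^ (k + 2) / 2 := by
          apply div_le_div_of_nonneg_left (by positivity) (by norm_num) h2
      _ = x ^ 2 / 2 * x ^ k := by rw [h1]; ring
  have hsum1 : Summable (fun k : ℕ => x ^ (k + 2) / ((k : ℝ) + 2)) :=
    Summable.of_nonneg_of_le (fun k => by positivity) hle hgeo
  calc ∑' k : ℕ, x ^ (k + 2) / ((k : ℝ) + 2) ≤ ∑' k : ℕ, x ^ 2 / 2 * x ^ k :=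
        Summable.tsum_le_tsum hle hsum1 hgeo
    _ = x ^ 2 / 2 * (1 - x)⁻¹ := by
        rw [tsum_mul_left, tsum_geometric_of_lt_one hx0 hx1]
    _ ≤ 3 / 4 * x ^ 2 := by
        have h1 : (2 : ℝ) / 3 ≤ 1 - x := by linarith
        have h2 : (1 - x)⁻¹ ≤ 3 / 2 := by
          rw [inv_le_comm₀ (by linarith) (by norm_num)]
          linarith [h1]
        nlinarith [sq_nonneg x]

lemma aux_log {y : ℝ} (h0 : 0 < y) (h3 : y ≤ 1 / 3) : |Real.log (1 + y) - y| ≤ y ^ 2 := by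
  have habs : |(-y)| < 1 := by rw [abs_neg, abs_of_pos h0]; linarith
  have key := Real.abs_log_sub_add_sum_range_le habs 2
  have hsum : (∑ i ∈ Finset.range 2, (-y) ^ (i + 1) / (i + 1)) = -y + y ^ 2 / 2 := by
    rw [Finset.sum_range_succ, Finset.sum_range_succ, Finset.sum_range_zero]
    push_cast
    ring
  rw [hsum] at key
  have hlog : (1 : ℝ) - -y = 1 + y := by ring
  rw [hlog, abs_neg, abs_of_pos h0] at key
  -- key : |(-y + y^2/2) + log (1+y)| ≤ y^3 / (1 - y)
  have hyb : y ^ 2 / 2 + y ^ (2 + 1) / (1 - y) ≤ y ^ 2 := by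
    have h1 : (2 : ℝ) / 3 ≤ 1 - y := by linarith
    have h2 : y ^ (2 + 1) = y ^ 2 * y := by ring
    rw [h2, div_add_div _ _ (by norm_num) (by linarith), div_le_iff₀ (by positivity)]
    nlinarith [mul_le_mul_of_nonneg_left (show 2 * y ≤ 1 - y by linarith) (sq_nonneg y)]
  calc |Real.log (1 + y) - y| = |(-y + y ^ 2 / 2 + Real.log (1 + y)) + (- (y ^ 2 / 2))| := by
        congr 1; ring
    _ ≤ |(-y + y ^ 2 / 2 + Real.log (1 + y))| + |(-(y ^ 2 / 2))| := abs_add_le _ _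
    _ ≤ y ^ (2 + 1) / (1 - y) + y ^ 2 / 2 := by
        rw [abs_neg, abs_of_pos (by positivity : (0:ℝ) < y ^ 2 / 2)]
        exact add_le_add_left key _
    _ ≤ y ^ 2 := by linarith [hyb]

/-- **Lemma (logarithmic estimate for rank two `p`-groups).** Let `p ≥ 3` be prime
and `G` a rank two abelian `p`-group. Then
`∑_{H ≠ 1} ∑_{k ≥ 2} |H|^{-k}/k ≤ 1`; consequently, for any set `T` of nontrivial
subgroups of `G`, `|∑_{H ∈ T} (log(1 + 1/|H|) − 1/|H|)| ≤ 1`. -/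
theorem log_estimate (p : ℕ) (hp : p.Prime) (hp3 : 3 ≤ p)
    (G : Type*) [CommGroup G] [Fintype G] (hG : IsPGroup p G)
    (hrk : ∃ a b : G, Subgroup.closure {a, b} = ⊤) :
    (∑ᶠ (H : Subgroup G) (_ : H ≠ ⊥),
        (∑' k : ℕ, (1 / (Nat.card H : ℝ)) ^ (k + 2) / ((k : ℝ) + 2)) ≤ 1) ∧
    (∀ T : Set (Subgroup G), (∀ H ∈ T, H ≠ ⊥) →
      |∑ᶠ H ∈ T, (Real.log (1 + 1 / (Nat.card H : ℝ)) - 1 / (Nat.card H : ℝ))| ≤ 1) := by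
  classical
  haveI : Fact p.Prime := ⟨hp⟩
  obtain ⟨a, b, hgen⟩ := hrk
  have hcard3 : ∀ H : Subgroup G, H ≠ ⊥ → 3 ≤ Nat.card H := by
    intro H hH
    obtain ⟨m, hm⟩ := (hG.to_subgroup H).exists_card_eq
    have hm1 : m ≠ 0 := by
      intro h
      exact hH (Subgroup.card_eq_one.mp (by rw [hm, h, pow_zero]))
    calc 3 ≤ p := hp3
      _ ≤ p ^ m := Nat.le_self_pow hm1 p
      _ = Nat.card H := hm.symm
  set filt := Finset.univ.filter (fun H : Subgroup G => H ≠ ⊥) with hfilt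
  have hsum := aux_sum hp hp3 hG hgen
  have hbig : ∑ H ∈ filt, (1 / (Nat.card H : ℝ)) ^ 2 ≤ 4 / 5 := hsum
  constructor
  · have heq : (∑ᶠ (H : Subgroup G) (_ : H ≠ ⊥),
        (∑' k : ℕ, (1 / (Nat.card H : ℝ)) ^ (k + 2) / ((k : ℝ) + 2)))
        = ∑ᶠ H ∈ {H : Subgroup G | H ≠ ⊥},
        (∑' k : ℕ, (1 / (Nat.card H : ℝ)) ^ (k + 2) / ((k : ℝ) + 2)) := rfl
    have hset : {H : Subgroup G | H ≠ ⊥} = (↑filt : Set (Subgroup G)) := by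
      ext H; simp [hfilt]
    rw [heq, hset, finsum_mem_coe_finset]
    calc ∑ H ∈ filt, (∑' k : ℕ, (1 / (Nat.card H : ℝ)) ^ (k + 2) / ((k : ℝ) + 2))
        ≤ ∑ H ∈ filt, (3 / 4) * (1 / (Nat.card H : ℝ)) ^ 2 := by
          refine Finset.sum_le_sum fun H hH => ?_
          exact aux_inner (hcard3 H (by simpa [hfilt] using hH))
      _ = (3 / 4) * ∑ H ∈ filt, (1 / (Nat.card H : ℝ)) ^ 2 := by rw [Finset.mul_sum]
      _ ≤ (3 / 4) * (4 / 5) := mul_le_mul_of_nonneg_left hbig (by norm_num)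
      _ ≤ 1 := by norm_num
  · intro T hT
    have hTfin : T.Finite := Set.toFinite T
    rw [finsum_mem_eq_finite_toFinset_sum _ hTfin]
    have hTsub : hTfin.toFinset ⊆ filt := by
      intro H hH
      rw [Set.Finite.mem_toFinset] at hH
      simp [hfilt, hT H hH]
    calc |∑ H ∈ hTfin.toFinset,
          (Real.log (1 + 1 / (Nat.card H : ℝ)) - 1 / (Nat.card H : ℝ))|
        ≤ ∑ H ∈ hTfin.toFinset,
          |Real.log (1 + 1 / (Nat.card H : ℝ)) - 1 / (Nat.card H : ℝ)| :=
          Finset.abs_sum_le_sum_abs _ _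
      _ ≤ ∑ H ∈ hTfin.toFinset, (1 / (Nat.card H : ℝ)) ^ 2 := by
          refine Finset.sum_le_sum fun H hH => ?_
          rw [Set.Finite.mem_toFinset] at hH
          have h3 := hcard3 H (hT H hH)
          have h3' : (3 : ℝ) ≤ (Nat.card H : ℝ) := by exact_mod_cast h3
          refine aux_log (by positivity) ?_
          rw [div_le_div_iff₀ (by linarith) (by norm_num)]
          linarith
      _ ≤ ∑ H ∈ filt, (1 / (Nat.card H : ℝ)) ^ 2 :=
          Finset.sum_le_sum_of_subset_of_nonneg hTsub (fun H _ _ => by positivity)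
      _ ≤ 4 / 5 := hbig
      _ ≤ 1 := by norm_num
end

section
/- Let H be a finite abelian group of odd order, K a maximal proper subgroup of H, and χ ∈ K̂. Let X = {τ ∈ Ĥ : τ restricted to K equals χ}. For each subgroup L ≤ H with L ≰ K, let P_L be the partition of X induced by the equivalence τ ≡ τ' iff the restriction of τ to L equals the restriction of τ' or of its complex conjugate τ̄' to L. Let S_χ = {L ≤ H : L ≰ K and K ⊓ L ≤ ker χ}. Then: (1) if M ≤ L (both ≰ K) then P_L refines P_M; (2) if M ≤ L and L ∈ S_χ then P_L = P_M; (3) every block of P_L has cardinality at most 2; (4) if L ∉ S_χ then P_L is the discrete partition of X; (5) if L ∈ S_χ then P_L has exactly one singleton block, namely {τ} for the unique τ ∈ X whose restriction to L is trivial, and every other block has cardinality exactly 2; (6) if M, L ≰ K and P_M ≠ P_L, then every block of P_M meets every block of P_L in at most one element. -/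
open scoped Classical

/-- The equivalence on characters of `H` induced by a subgroup `L`: two characters
are related iff their restrictions to `L` agree up to complex conjugation. -/
def relOn {H : Type*} [CommGroup H] (L : Subgroup H) (τ τ' : CharGp H) : Prop :=
  resCharTop L τ = resCharTop L τ' ∨ resCharTop L τ = charConj (resCharTop L τ')


section AuxLemmas

lemma aux_resCharTop_mul {G : Type*} [CommGroup G] (L : Subgroup G) (τ τ' : CharGp G) :
    resCharTop L (τ * τ') = resCharTop L τ * resCharTop L τ' := rfl

lemma aux_charConj_eq_inv {G : Type*} [Group G] [Finite G] (τ : CharGp G) :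
    charConj τ = τ⁻¹ := by
  refine MonoidHom.ext fun x => Units.ext ?_
  have h1 : (τ x) ^ (Nat.card G) = 1 := by
    rw [← map_pow, pow_card_eq_one', map_one]
  have hn : (Nat.card G) ≠ 0 := Nat.card_pos.ne'
  have h1' : ((τ x : ℂˣ) : ℂ) ^ (Nat.card G) = 1 := by
    have := congrArg Units.val h1
    simpa using this
  have hnorm : ‖((τ x : ℂˣ) : ℂ)‖ = 1 := Complex.norm_eq_one_of_pow_eq_one h1' hn
  show ((charConj τ x : ℂˣ) : ℂ) = ((τ⁻¹ x : ℂˣ) : ℂ)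
  have h2 : ((charConj τ x : ℂˣ) : ℂ) = (starRingEnd ℂ) ((τ x : ℂˣ) : ℂ) := rfl
  rw [h2, ← Complex.inv_eq_conj hnorm, MonoidHom.inv_apply]
  exact (Units.val_inv_eq_inv_val _).symm

lemma aux_unit_eq_one_of_sq {u : ℂˣ} {n : ℕ} (hn : Odd n) (hu : u ^ n = 1)
    (h2 : u * u = 1) : u = 1 := by
  have h2' : u ^ 2 = 1 := by rw [sq]; exact h2
  have d2 : orderOf u ∣ 2 := orderOf_dvd_of_pow_eq_one h2'
  have dn : orderOf u ∣ n := orderOf_dvd_of_pow_eq_one hu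
  have hd : orderOf u ∣ Nat.gcd 2 n := Nat.dvd_gcd d2 dn
  have hg : Nat.gcd 2 n = 1 := Nat.coprime_two_left.mpr hn
  rw [hg, Nat.dvd_one] at hd
  exact orderOf_eq_one_iff.mp hd

lemma aux_char_eq_one_of_mul_self {G : Type*} [Group G] [Finite G]
    (h : Odd (Nat.card G)) (ψ : CharGp G) (hψ : ψ * ψ = 1) : ψ = 1 := by
  refine MonoidHom.ext fun x => ?_
  show ψ x = 1
  have hx : ψ x * ψ x = 1 := by
    have := DFunLike.congr_fun hψ x
    simpa using this
  have hp : (ψ x) ^ (Nat.card G) = 1 := by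
    rw [← map_pow, pow_card_eq_one', map_one]
  exact aux_unit_eq_one_of_sq h hp hx

lemma aux_odd_subgroup {G : Type*} [Group G] [Finite G] (h : Odd (Nat.card G))
    (L : Subgroup G) : Odd (Nat.card L) := by
  have hd := Subgroup.card_subgroup_dvd_card L
  rcases Nat.even_or_odd (Nat.card L) with he | ho
  · exfalso
    obtain ⟨c, hc⟩ := he.two_dvd.trans hd
    rw [Nat.odd_iff] at h
    omega
  · exact ho

lemma aux_eq_inv_iff {G : Type*} [Group G] (a b : G →* ℂˣ) : a = b⁻¹ ↔ a * b = 1 :=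
  @eq_inv_iff_mul_eq_one (G →* ℂˣ) _ a b

lemma aux_one_mul {G : Type*} [Group G] (a : G →* ℂˣ) : 1 * a = a :=
  @one_mul (G →* ℂˣ) _ a

lemma aux_mul_comm {G : Type*} [Group G] (a b : G →* ℂˣ) : a * b = b * a :=
  @mul_comm (G →* ℂˣ) _ a b

lemma aux_mul_inv_cancel {G : Type*} [Group G] (a : G →* ℂˣ) : a * a⁻¹ = 1 :=
  @mul_inv_cancel (G →* ℂˣ) _ a

lemma aux_char_ext {G : Type*} [CommGroup G] {K L : Subgroup G} (h : K ⊔ L = ⊤)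
    {τ τ' : CharGp G} (hKr : resCharTop K τ = resCharTop K τ')
    (hLr : resCharTop L τ = resCharTop L τ') : τ = τ' := by
  have hKle : K ≤ τ.eqLocus τ' := fun x hx => DFunLike.congr_fun hKr (⟨x, hx⟩ : K)
  have hLle : L ≤ τ.eqLocus τ' := fun x hx => DFunLike.congr_fun hLr (⟨x, hx⟩ : L)
  have htop : (⊤ : Subgroup G) ≤ τ.eqLocus τ' := by
    rw [← h]; exact sup_le hKle hLle
  exact MonoidHom.ext fun x => htop (Subgroup.mem_top x)

lemma aux_resCharTop_of_le {G : Type*} [CommGroup G] {M L : Subgroup G} (h : M ≤ L)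
    (τ : CharGp G) : resCharTop M τ = resChar h (resCharTop L τ) := rfl

lemma aux_resChar_charConj {G : Type*} [CommGroup G] {M L : Subgroup G} (h : M ≤ L)
    (ψ : CharGp L) : resChar h (charConj ψ) = charConj (resChar h ψ) := rfl

end AuxLemmas

/-- **Lemma (structure of the partitions `P_L`).** Let `H` be a finite abelian group
of odd order, `K` a maximal proper subgroup, `χ ∈ K̂`, `X ⊆ Ĥ` the fiber of `χ`
under restriction, and for `L ≰ K` let `P_L` be the partition of `X` induced by
`relOn L`.  Let `S_χ` consist of those `L ≰ K` with `K ⊓ L ≤ ker χ`.  Then the six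
structural claims (1)–(6) hold. -/
theorem partition_structure (H : Type*) [CommGroup H] [Fintype H]
    (hodd : Odd (Nat.card H)) (K : Subgroup H) (hK : IsCoatom K) (χ : CharGp K) :
    -- (1) if `M ≤ L` then `P_L` refines `P_M`
    (∀ M L : Subgroup H, ¬ M ≤ K → ¬ L ≤ K → M ≤ L →
      ∀ τ, resCharTop K τ = χ → ∀ τ', resCharTop K τ' = χ →
        relOn L τ τ' → relOn M τ τ') ∧
    -- (2) if `M ≤ L` and `L ∈ S_χ` then `P_L = P_M`
    (∀ M L : Subgroup H, ¬ M ≤ K → ¬ L ≤ K → M ≤ L →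
      (K ⊓ L).subgroupOf K ≤ χ.ker →
      ∀ τ, resCharTop K τ = χ → ∀ τ', resCharTop K τ' = χ →
        (relOn L τ τ' ↔ relOn M τ τ')) ∧
    -- (3) every block of `P_L` has cardinality at most two
    (∀ L : Subgroup H, ¬ L ≤ K → ∀ τ, resCharTop K τ = χ →
      ({τ' | resCharTop K τ' = χ ∧ relOn L τ τ'}).ncard ≤ 2) ∧
    -- (4) if `L ∉ S_χ` then `P_L` is discrete
    (∀ L : Subgroup H, ¬ L ≤ K → ¬ ((K ⊓ L).subgroupOf K ≤ χ.ker) →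
      ∀ τ, resCharTop K τ = χ → ∀ τ', resCharTop K τ' = χ →
        (relOn L τ τ' ↔ τ = τ')) ∧
    -- (5) if `L ∈ S_χ` then `P_L` has exactly one singleton block, the one of the
    -- unique `τ ∈ X` restricting trivially to `L`; all other blocks have size two
    (∀ L : Subgroup H, ¬ L ≤ K → (K ⊓ L).subgroupOf K ≤ χ.ker →
      (∃! τ : CharGp H, resCharTop K τ = χ ∧ resCharTop L τ = 1) ∧
      (∀ τ, resCharTop K τ = χ →
        (resCharTop L τ = 1 → {τ' | resCharTop K τ' = χ ∧ relOn L τ τ'} = {τ}) ∧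
        (resCharTop L τ ≠ 1 →
          ({τ' | resCharTop K τ' = χ ∧ relOn L τ τ'}).ncard = 2))) ∧
    -- (6) if `P_M ≠ P_L` then blocks of `P_M` and `P_L` meet in at most one element
    (∀ M L : Subgroup H, ¬ M ≤ K → ¬ L ≤ K →
      ¬ (∀ τ, resCharTop K τ = χ → ∀ τ', resCharTop K τ' = χ →
          (relOn M τ τ' ↔ relOn L τ τ')) →
      ∀ τ, resCharTop K τ = χ → ∀ τ', resCharTop K τ' = χ →
        relOn M τ τ' → relOn L τ τ' → τ = τ') := by
  
  have hFin : Finite H := Finite.of_fintype H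
  -- `K ⊔ L = ⊤` whenever `L ≰ K`
  have hsup : ∀ L : Subgroup H, ¬ L ≤ K → K ⊔ L = ⊤ := by
    intro L hL
    refine hK.2 _ (lt_of_le_of_ne le_sup_left ?_)
    intro he
    exact hL (le_sup_right.trans he.ge)
  -- injectivity: characters agreeing on `K` and `L` are equal
  have hinj : ∀ L : Subgroup H, ¬ L ≤ K → ∀ τ τ' : CharGp H,
      resCharTop K τ = resCharTop K τ' → resCharTop L τ = resCharTop L τ' → τ = τ' :=
    fun L hL τ τ' h1 h2 => aux_char_ext (hsup L hL) h1 h2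
  -- conjugation is inversion
  have hconj : ∀ (L : Subgroup H) (τ : CharGp H),
      charConj (resCharTop L τ) = (resCharTop L τ)⁻¹ := fun L τ => aux_charConj_eq_inv _
  -- restatement of `relOn`
  have hrel : ∀ (L : Subgroup H) (τ τ' : CharGp H), relOn L τ τ' ↔
      (resCharTop L τ = resCharTop L τ' ∨ resCharTop L (τ * τ') = 1) := by
    intro L τ τ'
    simp only [relOn, hconj, aux_eq_inv_iff, ← aux_resCharTop_mul]
  -- the conjugate case forces `χ` trivial on `K ⊓ L`
  have hkey : ∀ (L : Subgroup H), ¬ L ≤ K → ∀ τ τ' : CharGp H, resCharTop K τ = χ →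
      resCharTop K τ' = χ → resCharTop L (τ * τ') = 1 →
      (K ⊓ L).subgroupOf K ≤ χ.ker := by
    intro L hL τ τ' hτ hτ' hmul x hx
    have hxL : (x : H) ∈ L := (Subgroup.mem_subgroupOf.mp hx).2
    have h1 : τ (x : H) * τ' (x : H) = 1 := by
      have := DFunLike.congr_fun hmul (⟨(x : H), hxL⟩ : L)
      exact this
    have h2 : τ (x : H) = χ x := DFunLike.congr_fun hτ x
    have h3 : τ' (x : H) = χ x := DFunLike.congr_fun hτ' x
    have hsq : χ x * χ x = 1 := by rw [h2, h3] at h1; exact h1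
    have hpow : (χ x) ^ (Nat.card K) = 1 := by
      rw [← map_pow, pow_card_eq_one', map_one]
    exact aux_unit_eq_one_of_sq (aux_odd_subgroup hodd K) hpow hsq
  -- triviality on `K ⊓ L` and `M` implies triviality on `L`
  have htriv : ∀ (σ : CharGp H) (M L : Subgroup H), ¬ M ≤ K → M ≤ L →
      resCharTop M σ = 1 → (∀ y : H, y ∈ K ⊓ L → σ y = 1) → resCharTop L σ = 1 := by
    intro σ M L hM hML hMres hKL
    refine MonoidHom.ext fun x => ?_
    have hx : (x : H) ∈ (⊤ : Subgroup H) := Subgroup.mem_top _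
    rw [← hsup M hM] at hx
    obtain ⟨k, hk, m, hm, hkm⟩ := Subgroup.mem_sup.mp hx
    have hkL : k ∈ L := by
      have hk' : k = (x : H) * m⁻¹ := by rw [← hkm]; group
      rw [hk']; exact mul_mem x.2 (inv_mem (hML hm))
    have h1 : σ k = 1 := hKL k ⟨hk, hkL⟩
    have h2 : σ m = 1 := by
      have := DFunLike.congr_fun hMres (⟨m, hm⟩ : M)
      exact this
    show σ (x : H) = 1
    rw [← hkm, map_mul, h1, h2, mul_one]
  -- `χ` trivial on `K ⊓ L` makes `τ * τ'` trivial on `K ⊓ L`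
  have hKLtriv : ∀ (L : Subgroup H), (K ⊓ L).subgroupOf K ≤ χ.ker →
      ∀ τ τ' : CharGp H, resCharTop K τ = χ → resCharTop K τ' = χ →
      ∀ y : H, y ∈ K ⊓ L → (τ * τ') y = 1 := by
    intro L hker τ τ' hτ hτ' y hy
    have hyK : y ∈ K := hy.1
    have hmem : (⟨y, hyK⟩ : K) ∈ (K ⊓ L).subgroupOf K := Subgroup.mem_subgroupOf.mpr hy
    have hχ : χ ⟨y, hyK⟩ = 1 := hker hmem
    have h2 : τ y = χ ⟨y, hyK⟩ := DFunLike.congr_fun hτ (⟨y, hyK⟩ : K)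
    have h3 : τ' y = χ ⟨y, hyK⟩ := DFunLike.congr_fun hτ' (⟨y, hyK⟩ : K)
    show τ y * τ' y = 1
    rw [h2, h3, hχ, mul_one]
  -- claim (1)
  have part1 : ∀ M L : Subgroup H, ¬ M ≤ K → ¬ L ≤ K → M ≤ L →
      ∀ τ, resCharTop K τ = χ → ∀ τ', resCharTop K τ' = χ →
        relOn L τ τ' → relOn M τ τ' := by
    intro M L hM hL hML τ hτ τ' hτ' hr
    rcases hr with h | h
    · left; rw [aux_resCharTop_of_le hML, aux_resCharTop_of_le hML, h]
    · right
      rw [aux_resCharTop_of_le hML τ, aux_resCharTop_of_le hML τ', h, aux_resChar_charConj]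
  -- claim (4)
  have part4 : ∀ L : Subgroup H, ¬ L ≤ K → ¬ ((K ⊓ L).subgroupOf K ≤ χ.ker) →
      ∀ τ, resCharTop K τ = χ → ∀ τ', resCharTop K τ' = χ →
        (relOn L τ τ' ↔ τ = τ') := by
    intro L hL hker τ hτ τ' hτ'
    constructor
    · intro hr
      rcases (hrel L τ τ').mp hr with h | h
      · exact hinj L hL τ τ' (hτ.trans hτ'.symm) h
      · exact absurd (hkey L hL τ τ' hτ hτ' h) hker
    · rintro rfl; exact Or.inl rfl
  -- claim (2)
  have part2 : ∀ M L : Subgroup H, ¬ M ≤ K → ¬ L ≤ K → M ≤ L →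
      (K ⊓ L).subgroupOf K ≤ χ.ker →
      ∀ τ, resCharTop K τ = χ → ∀ τ', resCharTop K τ' = χ →
        (relOn L τ τ' ↔ relOn M τ τ') := by
    intro M L hM hL hML hker τ hτ τ' hτ'
    constructor
    · exact part1 M L hM hL hML τ hτ τ' hτ'
    · intro hr
      rcases (hrel M τ τ').mp hr with h | h
      · have : τ = τ' := hinj M hM τ τ' (hτ.trans hτ'.symm) h
        rw [this]; exact Or.inl rfl
      · refine (hrel L τ τ').mpr (Or.inr ?_)
        exact htriv (τ * τ') M L hM hML h (hKLtriv L hker τ τ' hτ hτ')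
  -- claim (3)
  have part3 : ∀ L : Subgroup H, ¬ L ≤ K → ∀ τ, resCharTop K τ = χ →
      ({τ' | resCharTop K τ' = χ ∧ relOn L τ τ'}).ncard ≤ 2 := by
    intro L hL τ hτ
    have hmaps : ∀ τ' ∈ {τ' | resCharTop K τ' = χ ∧ relOn L τ τ'},
        resCharTop L τ' ∈ ({resCharTop L τ, (resCharTop L τ)⁻¹} : Set (CharGp L)) := by
      rintro τ' ⟨hτ', hr⟩
      rcases (hrel L τ τ').mp hr with h | h
      · exact Or.inl h.symm
      · refine Or.inr ((aux_eq_inv_iff _ _).mpr ?_)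
        rw [aux_mul_comm, ← aux_resCharTop_mul]
        exact h
    have hinj' : Set.InjOn (resCharTop L) {τ' | resCharTop K τ' = χ ∧ relOn L τ τ'} := by
      rintro a ⟨ha, _⟩ b ⟨hb, _⟩ hab
      exact hinj L hL a b (ha.trans hb.symm) hab
    calc ({τ' | resCharTop K τ' = χ ∧ relOn L τ τ'}).ncard
        ≤ ({resCharTop L τ, (resCharTop L τ)⁻¹} : Set (CharGp L)).ncard :=
          Set.ncard_le_ncard_of_injOn _ hmaps hinj' (Set.toFinite _)
      _ ≤ ({(resCharTop L τ)⁻¹} : Set (CharGp L)).ncard + 1 := Set.ncard_insert_le _ _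
      _ ≤ 2 := by rw [Set.ncard_singleton]
  -- claim (5)
  have part5 : ∀ L : Subgroup H, ¬ L ≤ K → (K ⊓ L).subgroupOf K ≤ χ.ker →
      (∃! τ : CharGp H, resCharTop K τ = χ ∧ resCharTop L τ = 1) ∧
      (∀ τ, resCharTop K τ = χ →
        (resCharTop L τ = 1 → {τ' | resCharTop K τ' = χ ∧ relOn L τ τ'} = {τ}) ∧
        (resCharTop L τ ≠ 1 →
          ({τ' | resCharTop K τ' = χ ∧ relOn L τ τ'}).ncard = 2)) := by
    intro L hL hker
    -- construction of the extension `τ₀`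
    set φ : K →* H ⧸ L := (QuotientGroup.mk' L).comp K.subtype with hφdef
    have hφ : ∀ x : K, φ x = QuotientGroup.mk (x : H) := fun x => rfl
    have hsurj : Function.Surjective φ := by
      intro q
      refine QuotientGroup.induction_on q ?_
      intro z
      have hz : z ∈ (⊤ : Subgroup H) := Subgroup.mem_top _
      rw [← hsup L hL] at hz
      obtain ⟨k, hk, l, hl, hkl⟩ := Subgroup.mem_sup.mp hz
      refine ⟨⟨k, hk⟩, ?_⟩
      rw [hφ]
      refine QuotientGroup.eq.mpr ?_
      show k⁻¹ * z ∈ L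
      rw [← hkl]
      simpa using hl
    have hkerφ : ∀ x ∈ φ.ker, χ x = 1 := by
      intro x hx
      have hxL : (x : H) ∈ L := by
        have : QuotientGroup.mk (x : H) = (1 : H ⧸ L) := hx
        exact (QuotientGroup.eq_one_iff _).mp this
      exact hker (Subgroup.mem_subgroupOf.mpr ⟨x.2, hxL⟩)
    set e := QuotientGroup.quotientKerEquivOfSurjective φ hsurj with hedef
    set ψ : H ⧸ L →* ℂˣ :=
      (QuotientGroup.lift φ.ker χ hkerφ).comp e.symm.toMonoidHom with hψdef
    set τ₀ : CharGp H := ψ.comp (QuotientGroup.mk' L) with hτ₀def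
    have hτ₀L : resCharTop L τ₀ = 1 := by
      refine MonoidHom.ext fun x => ?_
      show ψ (QuotientGroup.mk (x : H)) = 1
      have : QuotientGroup.mk (x : H) = (1 : H ⧸ L) := (QuotientGroup.eq_one_iff _).mpr x.2
      rw [this, map_one]
    have hτ₀K : resCharTop K τ₀ = χ := by
      refine MonoidHom.ext fun x => ?_
      show ψ (QuotientGroup.mk (x : H)) = χ x
      have h1 : e (QuotientGroup.mk x) = φ x := rfl
      have h2 : e.symm (φ x) = QuotientGroup.mk x := by
        rw [← h1, MulEquiv.symm_apply_apply]
      show (QuotientGroup.lift φ.ker χ hkerφ) (e.symm (QuotientGroup.mk (x : H))) = χ x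
      rw [← hφ x, h2]
      exact QuotientGroup.lift_mk' _ _ _
    refine ⟨⟨τ₀, ⟨hτ₀K, hτ₀L⟩, ?_⟩, ?_⟩
    · rintro τ₁ ⟨h1, h2⟩
      exact hinj L hL τ₁ τ₀ (h1.trans hτ₀K.symm) (h2.trans hτ₀L.symm)
    · intro τ hτ
      constructor
      · -- singleton block
        intro h1
        ext τ'
        simp only [Set.mem_setOf_eq, Set.mem_singleton_iff]
        constructor
        · rintro ⟨hτ', hr⟩
          rcases (hrel L τ τ').mp hr with h | h
          · exact (hinj L hL τ τ' (hτ.trans hτ'.symm) h).symm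
          · rw [aux_resCharTop_mul, h1, aux_one_mul] at h
            exact hinj L hL τ' τ (hτ'.trans hτ.symm) (h.trans h1.symm)
        · rintro rfl; exact ⟨hτ, Or.inl rfl⟩
      · -- block of size exactly two
        intro h1
        set ρ : CharGp H := τ₀ * τ₀ * τ⁻¹ with hρdef
        have hρK : resCharTop K ρ = χ := by
          refine MonoidHom.ext fun x => ?_
          show τ₀ (x : H) * τ₀ (x : H) * (τ (x : H))⁻¹ = χ x
          have e0 : τ₀ (x : H) = χ x := DFunLike.congr_fun hτ₀K x
          have e1 : τ (x : H) = χ x := DFunLike.congr_fun hτ x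
          rw [e0, e1]
          group
        have hρL : resCharTop L ρ = (resCharTop L τ)⁻¹ := by
          refine MonoidHom.ext fun x => ?_
          show τ₀ (x : H) * τ₀ (x : H) * (τ (x : H))⁻¹ = (τ (x : H))⁻¹
          have e0 : τ₀ (x : H) = 1 := DFunLike.congr_fun hτ₀L x
          rw [e0]
          group
        have hrelρ : relOn L τ ρ := by
          refine (hrel L τ ρ).mpr (Or.inr ?_)
          rw [aux_resCharTop_mul, hρL, aux_mul_inv_cancel]
        have hneρ : τ ≠ ρ := by
          intro he
          apply h1
          have : resCharTop L τ = (resCharTop L τ)⁻¹ := by rw [← hρL, ← he]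
          have hsq : resCharTop L τ * resCharTop L τ = 1 := by
            nth_rewrite 2 [this]
            rw [aux_mul_inv_cancel]
          exact aux_char_eq_one_of_mul_self (aux_odd_subgroup hodd L) _ hsq
        have hset : {τ' | resCharTop K τ' = χ ∧ relOn L τ τ'} = {τ, ρ} := by
          ext τ'
          simp only [Set.mem_setOf_eq, Set.mem_insert_iff, Set.mem_singleton_iff]
          constructor
          · rintro ⟨hτ', hr⟩
            rcases (hrel L τ τ').mp hr with h | h
            · exact Or.inl (hinj L hL τ τ' (hτ.trans hτ'.symm) h).symm
            · right
              rw [aux_resCharTop_mul] at h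
              have : resCharTop L τ' = (resCharTop L τ)⁻¹ := (aux_eq_inv_iff _ _).mpr
                (by rw [aux_mul_comm, ← aux_resCharTop_mul]; exact h)
              exact hinj L hL τ' ρ (hτ'.trans hρK.symm) (this.trans hρL.symm)
          · rintro (rfl | rfl)
            · exact ⟨hτ, Or.inl rfl⟩
            · exact ⟨hρK, hrelρ⟩
        rw [hset]
        exact Set.ncard_pair hneρ
  -- claim (6)
  have part6 : ∀ M L : Subgroup H, ¬ M ≤ K → ¬ L ≤ K →
      ¬ (∀ τ, resCharTop K τ = χ → ∀ τ', resCharTop K τ' = χ →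
          (relOn M τ τ' ↔ relOn L τ τ')) →
      ∀ τ, resCharTop K τ = χ → ∀ τ', resCharTop K τ' = χ →
        relOn M τ τ' → relOn L τ τ' → τ = τ' := by
    intro M L hM hL hne τ hτ τ' hτ' hrM hrL
    by_contra hcont
    apply hne
    -- from the witnesses, both relations are the conjugate relation with the same `σ`
    have hM1 : resCharTop M (τ * τ') = 1 := by
      rcases (hrel M τ τ').mp hrM with h | h
      · exact absurd (hinj M hM τ τ' (hτ.trans hτ'.symm) h) hcont
      · exact h
    have hL1 : resCharTop L (τ * τ') = 1 := by
      rcases (hrel L τ τ').mp hrL with h | h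
      · exact absurd (hinj L hL τ τ' (hτ.trans hτ'.symm) h) hcont
      · exact h
    have hKσ : resCharTop K (τ * τ') = χ * χ := by
      refine MonoidHom.ext fun x => ?_
      show (resCharTop K τ) x * (resCharTop K τ') x = χ x * χ x
      rw [hτ, hτ']
    -- key step: any `ρ, ρ'` conj-related on `M` are conj-related on `L` and back
    have hstep : ∀ (A B : Subgroup H), ¬ A ≤ K → ¬ B ≤ K →
        resCharTop A (τ * τ') = 1 → resCharTop B (τ * τ') = 1 →
        ∀ ρ, resCharTop K ρ = χ → ∀ ρ', resCharTop K ρ' = χ →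
          relOn A ρ ρ' → relOn B ρ ρ' := by
      intro A B hA hB hA1 hB1 ρ hρ ρ' hρ'
      intro hr
      rcases (hrel A ρ ρ').mp hr with h | h
      · have : ρ = ρ' := hinj A hA ρ ρ' (hρ.trans hρ'.symm) h
        rw [this]; exact Or.inl rfl
      · refine (hrel B ρ ρ').mpr (Or.inr ?_)
        have hKδ : resCharTop K (ρ * ρ') = χ * χ := by
          refine MonoidHom.ext fun x => ?_
          show (resCharTop K ρ) x * (resCharTop K ρ') x = χ x * χ x
          rw [hρ, hρ']
        have hδσ : ρ * ρ' = τ * τ' :=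
          hinj A hA _ _ (hKδ.trans hKσ.symm) (h.trans hA1.symm)
        rw [hδσ]; exact hB1
    intro ρ hρ ρ' hρ'
    exact ⟨hstep M L hM hL hM1 hL1 ρ hρ ρ' hρ',
           hstep L M hL hM hL1 hM1 ρ hρ ρ' hρ'⟩
  exact ⟨part1, part2, part3, part4, part5, part6⟩
end
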